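/- arXiv:2509.20921 — 6 statements merged into one kernel-verified Lean document; each statement's English description precedes it below -/
import Mathlib

section
/- The function d_rk defines a metric on the set (ℝ²_≤ ∖ Δ) ∪ {Δ} (the quotient of ℝ²_≤ in which the diagonal is collapsed to a single point Δ): d_rk is nonnegative and symmetric, d_rk(u,v) = 0 if and only if u = v, and the triangle inequality d_rk(u,w) ≤ d_rk(u,v) + d_rk(v,w) holds for all u, v, w in (ℝ²_≤ ∖ Δ) ∪ {Δ}, where distances involving the point Δ are given by d_rk(x,Δ) = ½(x₂−x₁)². -/
open scoped Classical ENNReal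
open MeasureTheory Filter

noncomputable section

/-- Off-diagonal points of `ℝ²_≤`. -/
abbrev Pt : Type := {p : ℝ × ℝ // p.1 < p.2}

/-- The quotient `(ℝ²_≤ ∖ Δ) ∪ {Δ}`: the diagonal is collapsed to the single
point `none`. -/
abbrev PtD : Type := Option Pt

/-- The rank "distance" formula on `ℝ²_≤`. -/
def drk (x y : ℝ × ℝ) : ℝ :=
  (x.2 - x.1) ^ 2 / 2 + (y.2 - y.1) ^ 2 / 2 - (max (min x.2 y.2 - max x.1 y.1) 0) ^ 2

/-- The dimension "distance" formula on `ℝ²_≤` (length of the symmetric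
difference of the intervals `[x₁,x₂]` and `[y₁,y₂]`). -/
def ddim (x y : ℝ × ℝ) : ℝ :=
  (x.2 - x.1) + (y.2 - y.1) - 2 * max (min x.2 y.2 - max x.1 y.1) 0

/-- `d_rk` on the quotient `(ℝ²_≤ ∖ Δ) ∪ {Δ}`, with `d_rk(x,Δ) = ½(x₂−x₁)²`. -/
def drkQ : PtD → PtD → ℝ
  | Option.some x, Option.some y => drk x.1 y.1
  | Option.some x, Option.none => (x.1.2 - x.1.1) ^ 2 / 2
  | Option.none, Option.some y => (y.1.2 - y.1.1) ^ 2 / 2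
  | Option.none, Option.none => 0

/-- `d_dim` on the quotient `(ℝ²_≤ ∖ Δ) ∪ {Δ}`, with `d_dim(x,Δ) = x₂−x₁`. -/
def ddimQ : PtD → PtD → ℝ
  | Option.some x, Option.some y => ddim x.1 y.1
  | Option.some x, Option.none => x.1.2 - x.1.1
  | Option.none, Option.some y => y.1.2 - y.1.1
  | Option.none, Option.none => 0


def ov (x y : ℝ × ℝ) : ℝ := max (min x.2 y.2 - max x.1 y.1) 0

lemma ov_nonneg (x y : ℝ × ℝ) : 0 ≤ ov x y := le_max_right _ _

lemma ov_symm (x y : ℝ × ℝ) : ov x y = ov y x := by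
  simp [ov, min_comm, max_comm]

lemma ov_le_left (x y : ℝ × ℝ) (hx : x.1 ≤ x.2) : ov x y ≤ x.2 - x.1 := by
  apply max_le _ (by linarith)
  have h1 : min x.2 y.2 ≤ x.2 := min_le_left _ _
  have h2 : x.1 ≤ max x.1 y.1 := le_max_left _ _
  linarith

lemma ov_le_right (x y : ℝ × ℝ) (hy : y.1 ≤ y.2) : ov x y ≤ y.2 - y.1 := by
  rw [ov_symm]; exact ov_le_left y x hy

lemma ov_tri (x y z : ℝ × ℝ) (hy : y.1 ≤ y.2) :
    ov x y + ov y z ≤ (y.2 - y.1) + ov x z := by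
  have b1 : min x.2 y.2 ≤ y.2 := min_le_right _ _
  have b2 : y.1 ≤ max x.1 y.1 := le_max_right _ _
  have b3 : min y.2 z.2 ≤ y.2 := min_le_left _ _
  have b4 : y.1 ≤ max y.1 z.1 := le_max_left _ _
  have h1 : min x.2 y.2 + min y.2 z.2 ≤ y.2 + min x.2 z.2 := by
    rcases min_cases x.2 y.2 with ⟨e1, l1⟩ | ⟨e1, l1⟩ <;>
      rcases min_cases y.2 z.2 with ⟨e2, l2⟩ | ⟨e2, l2⟩ <;>
      rcases min_cases x.2 z.2 with ⟨e3, l3⟩ | ⟨e3, l3⟩ <;> linarith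
  have h2 : y.1 + max x.1 z.1 ≤ max x.1 y.1 + max y.1 z.1 := by
    rcases max_cases x.1 y.1 with ⟨e1, l1⟩ | ⟨e1, l1⟩ <;>
      rcases max_cases y.1 z.1 with ⟨e2, l2⟩ | ⟨e2, l2⟩ <;>
      rcases max_cases x.1 z.1 with ⟨e3, l3⟩ | ⟨e3, l3⟩ <;> linarith
  have h3 : (0:ℝ) ≤ max (min x.2 z.2 - max x.1 z.1) 0 := le_max_right _ _
  have h4 : min x.2 z.2 - max x.1 z.1 ≤ max (min x.2 z.2 - max x.1 z.1) 0 := le_max_left _ _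
  unfold ov
  rcases max_cases (min x.2 y.2 - max x.1 y.1) (0:ℝ) with ⟨e1, l1⟩ | ⟨e1, l1⟩ <;>
    rcases max_cases (min y.2 z.2 - max y.1 z.1) (0:ℝ) with ⟨e2, l2⟩ | ⟨e2, l2⟩ <;>
    rw [e1, e2] <;> linarith

lemma key_ineq (p q r b : ℝ) (hp0 : 0 ≤ p) (hq0 : 0 ≤ q) (hr0 : 0 ≤ r)
    (hp : p ≤ b) (hq : q ≤ b) (h : p + q ≤ b + r) : p^2 + q^2 ≤ b^2 + r^2 := by
  rcases le_total (p + q) b with h' | h'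
  · nlinarith
  · nlinarith [mul_nonneg (sub_nonneg.2 hp) (sub_nonneg.2 hq),
      mul_nonneg (by linarith : (0:ℝ) ≤ r - (p + q - b))
        (by linarith : (0:ℝ) ≤ r + (p + q - b))]

lemma drk_eq (x y : ℝ × ℝ) :
    drk x y = (x.2 - x.1) ^ 2 / 2 + (y.2 - y.1) ^ 2 / 2 - ov x y ^ 2 := rfl

lemma drk_nonneg (x y : ℝ × ℝ) (hx : x.1 ≤ x.2) (hy : y.1 ≤ y.2) : 0 ≤ drk x y := by
  rw [drk_eq]
  have h1 := ov_nonneg x y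
  have h2 := ov_le_left x y hx
  have h3 := ov_le_right x y hy
  nlinarith

lemma drk_self (x : Pt) (y : Pt) (h : drk x.1 y.1 = 0) : x = y := by
  obtain ⟨⟨x1, x2⟩, hx⟩ := x
  obtain ⟨⟨y1, y2⟩, hy⟩ := y
  simp only at hx hy ⊢
  rw [drk_eq] at h
  set m := ov (x1, x2) (y1, y2) with hm
  have h1 : 0 ≤ m := ov_nonneg _ _
  have h2 : m ≤ x2 - x1 := ov_le_left _ _ (le_of_lt hx)
  have h3 : m ≤ y2 - y1 := ov_le_right _ _ (le_of_lt hy)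
  have hmx : m = x2 - x1 := by nlinarith
  have hmy : m = y2 - y1 := by nlinarith
  have hmpos : 0 < m := by linarith
  have hm' : m = min x2 y2 - max x1 y1 := by
    rw [hm]; unfold ov; simp only
    rcases max_cases (min x2 y2 - max x1 y1) (0:ℝ) with ⟨e1, l1⟩ | ⟨e1, l1⟩
    · exact e1
    · rw [hm] at hmpos; unfold ov at hmpos; simp only at hmpos; linarith
  have a1 : min x2 y2 ≤ x2 := min_le_left _ _
  have a2 : min x2 y2 ≤ y2 := min_le_right _ _
  have a3 : x1 ≤ max x1 y1 := le_max_left _ _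
  have a4 : y1 ≤ max x1 y1 := le_max_right _ _
  have e1 : x1 = y1 := by linarith
  have e2 : x2 = y2 := by linarith
  ext <;> simp [e1, e2]

/-- `d_rk` defines a metric on the quotient `(ℝ²_≤ ∖ Δ) ∪ {Δ}`: it is
nonnegative, symmetric, vanishes exactly on the diagonal of the quotient, and
satisfies the triangle inequality. -/
theorem stmt1 :
    (∀ u v : PtD, 0 ≤ drkQ u v) ∧
    (∀ u v : PtD, drkQ u v = drkQ v u) ∧
    (∀ u v : PtD, drkQ u v = 0 ↔ u = v) ∧
    (∀ u v w : PtD, drkQ u w ≤ drkQ u v + drkQ v w) := by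
  refine ⟨?_, ?_, ?_, ?_⟩
  · rintro (_ | x) (_ | y)
    · simp [drkQ]
    · exact div_nonneg (sq_nonneg _) (by norm_num)
    · exact div_nonneg (sq_nonneg _) (by norm_num)
    · exact drk_nonneg x.1 y.1 x.2.le y.2.le
  · rintro (_ | x) (_ | y) <;> simp [drkQ, drk, min_comm, max_comm] <;> ring
  · rintro (_ | x) (_ | y)
    · simp [drkQ]
    · simp only [drkQ]
      constructor
      · intro h
        exfalso
        have hd : 0 < y.1.2 - y.1.1 := by linarith [y.2]
        nlinarith [mul_pos hd hd]
      · intro h; exact absurd h (by simp)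
    · simp only [drkQ]
      constructor
      · intro h
        exfalso
        have hd : 0 < x.1.2 - x.1.1 := by linarith [x.2]
        nlinarith [mul_pos hd hd]
      · intro h; exact absurd h (by simp)
    · simp only [drkQ, Option.some.injEq]
      constructor
      · exact drk_self x y
      · rintro rfl
        rw [drk_eq]
        have : ov x.1 x.1 = x.1.2 - x.1.1 := by
          unfold ov
          simp only [min_self, max_self]
          rw [max_eq_left (by linarith [x.2.le])]
        rw [this]; ring
  · rintro (_ | x) (_ | y) (_ | z)
    · simp [drkQ]
    · simp only [drkQ]; linarith [le_refl ((z.1.2 - z.1.1) ^ 2 / 2)]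
    · simp only [drkQ]; positivity
    · simp only [drkQ, drk_eq]
      have h1 := ov_nonneg y.1 z.1
      have h2 := ov_le_left y.1 z.1 y.2.le
      nlinarith
    · simp only [drkQ]; linarith [le_refl ((x.1.2 - x.1.1) ^ 2 / 2)]
    · simp only [drkQ, drk_eq]
      nlinarith [sq_nonneg (ov x.1 z.1)]
    · simp only [drkQ, drk_eq]
      have h1 := ov_nonneg x.1 y.1
      have h2 := ov_le_right x.1 y.1 y.2.le
      nlinarith
    · simp only [drkQ, drk_eq]
      have := key_ineq (ov x.1 y.1) (ov y.1 z.1) (ov x.1 z.1) (y.1.2 - y.1.1)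
        (ov_nonneg _ _) (ov_nonneg _ _) (ov_nonneg _ _)
        (ov_le_right x.1 y.1 y.2.le) (ov_le_left y.1 z.1 y.2.le)
        (ov_tri x.1 y.1 z.1 y.2.le)
      nlinarith [this]
end
end

section
/- Neither the identity map from ((ℝ²_≤ ∖ Δ) ∪ {Δ}, d_rk) to ((ℝ²_≤ ∖ Δ) ∪ {Δ}, d_dim) nor its inverse is Lipschitz: for every constant C > 0 there exist distinct points u, v in (ℝ²_≤ ∖ Δ) ∪ {Δ} with d_rk(u,v) > C · d_dim(u,v), and there exist distinct points u', v' with d_dim(u',v') > C · d_rk(u',v'). In particular, for x = (0,c) one has d_rk(x,Δ)/d_dim(x,Δ) = c/2 → ∞ as c → ∞ and d_dim(x,Δ)/d_rk(x,Δ) = 2/c → ∞ as c → 0⁺. -/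
open scoped Classical ENNReal
open MeasureTheory Filter

noncomputable section

/-- Neither the identity from `d_rk` to `d_dim` nor its inverse is Lipschitz;
in particular for `x = (0,c)` the ratio `d_rk(x,Δ)/d_dim(x,Δ) = c/2 → ∞` as
`c → ∞`, and `d_dim(x,Δ)/d_rk(x,Δ) = 2/c → ∞` as `c → 0⁺`. -/
theorem stmt2 :
    (∀ C : ℝ, 0 < C →
      (∃ u v : PtD, u ≠ v ∧ C * ddimQ u v < drkQ u v) ∧
      (∃ u v : PtD, u ≠ v ∧ C * drkQ u v < ddimQ u v)) ∧
    (∀ c : ℝ, ∀ hc : 0 < c,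
      drkQ (some ⟨(0, c), hc⟩) none / ddimQ (some ⟨(0, c), hc⟩) none = c / 2 ∧
      ddimQ (some ⟨(0, c), hc⟩) none / drkQ (some ⟨(0, c), hc⟩) none = 2 / c) ∧
    Tendsto (fun c : ℝ => c / 2) atTop atTop ∧
    Tendsto (fun c : ℝ => 2 / c) (nhdsWithin 0 (Set.Ioi 0)) atTop := by
  refine ⟨fun C hC => ?_, fun c hc => ?_, ?_, ?_⟩
  · constructor
    · -- take c large: c = 2C+2
      have h : (0:ℝ) < 2*C + 2 := by linarith
      refine ⟨some ⟨(0, 2*C+2), by simpa using h⟩, none, by simp, ?_⟩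
      show C * (2*C+2 - 0) < (2*C+2 - 0)^2/2
      nlinarith
    · -- take c small: c = 1/(C+1)
      have hC1 : (0:ℝ) < C + 1 := by linarith
      have h : (0:ℝ) < 1/(C+1) := by positivity
      refine ⟨some ⟨(0, 1/(C+1)), by simpa using h⟩, none, by simp, ?_⟩
      show C * ((1/(C+1) - 0)^2/2) < 1/(C+1) - 0
      have h2 : C * ((1/(C+1) - 0)^2/2) = C/(2*(C+1)^2) := by field_simp; ring
      rw [h2, sub_zero, div_lt_div_iff₀ (by positivity) hC1]
      nlinarith
  · constructor
    · show ((c - 0)^2/2) / (c - 0) = c / 2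
      field_simp; ring
    · show (c - 0) / ((c - 0)^2/2) = 2 / c
      field_simp; ring; exact mul_inv_cancel₀ hc.ne'
  · exact (tendsto_id.atTop_div_const two_pos)
  · have := Tendsto.const_mul_atTop (by norm_num : (0:ℝ) < 2) tendsto_inv_nhdsGT_zero
    simpa [div_eq_mul_inv] using this

end
end

section
/- Let α and β be finite persistence diagrams. Then ‖Λα − Λβ‖₁ ≤ ½ W₁^rk(α, β). -/
open scoped Classical ENNReal
open MeasureTheory Filter

noncomputable section

/-- The cost of the coupling between finite diagrams `α` and `β` determined by
the multiset `m` of matched pairs: matched pairs pay `d` between themselves,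
and every unmatched point of `α` or `β` is matched with the diagonal `Δ`. -/
def cost (d : PtD → PtD → ℝ) (α β : Multiset Pt) (m : Multiset (Pt × Pt)) : ℝ :=
  (m.map fun p => d (some p.1) (some p.2)).sum
    + ((α - m.map Prod.fst).map fun x => d (some x) none).sum
    + ((β - m.map Prod.snd).map fun y => d none (some y)).sum

/-- The 1-Wasserstein distance between finite persistence diagrams with ground
metric `d`: the infimum of the costs of all couplings. -/
def W1fin (d : PtD → PtD → ℝ) (α β : Multiset Pt) : ℝ :=
  sInf {c : ℝ | ∃ m : Multiset (Pt × Pt),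
    m.map Prod.fst ≤ α ∧ m.map Prod.snd ≤ β ∧ c = cost d α β m}

/-- The tent function `tent_x(t) = max(0, min(t−x₁, x₂−t))`. -/
def tent (x : Pt) (t : ℝ) : ℝ := max 0 (min (t - x.1.1) (x.1.2 - t))

/-- The persistence landscape `λ_α(k,t)`: the `k`-th largest element of the
multiset `{tent_x(t) : x ∈ α}` (and `0` if `α` has fewer than `k` elements). -/
def landscape (α : Multiset Pt) (k : ℕ) (t : ℝ) : ℝ :=
  sSup {h : ℝ | 0 < h ∧ k ≤ Multiset.card (α.filter fun x => h ≤ tent x t)}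

/-- `‖Λα − Λβ‖₁ = ∑_{k ≥ 1} ∫ |λ_α(k,t) − λ_β(k,t)| dt`. -/
def lambdaDistFin (α β : Multiset Pt) : ℝ :=
  ∑' k : ℕ, ∫ t : ℝ, |landscape α (k + 1) t - landscape β (k + 1) t|

/-- sorted (descending) list of a real multiset -/
noncomputable def srt (s : Multiset ℝ) : List ℝ := s.sort (· ≥ ·)

lemma srt_coe (s : Multiset ℝ) : (srt s : Multiset ℝ) = s := Multiset.sort_eq s _
lemma srt_sorted (s : Multiset ℝ) : (srt s).Pairwise (· ≥ ·) := Multiset.pairwise_sort s _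
lemma srt_length (s : Multiset ℝ) : (srt s).length = Multiset.card s := Multiset.length_sort _

lemma srt_unique {s : Multiset ℝ} {l : List ℝ} (h : (l : Multiset ℝ) = s)
    (hl : l.Pairwise (· ≥ ·)) : srt s = l := by
  refine List.Perm.eq_of_pairwise' (srt_sorted s) hl ?_
  have : ((srt s : List ℝ) : Multiset ℝ) = (l : Multiset ℝ) := by rw [srt_coe, h]
  exact Quotient.exact this

/-- n-th largest element (0-indexed), default 0 -/
noncomputable def nthL (s : Multiset ℝ) (k : ℕ) : ℝ := (srt s).getD k 0

lemma nthL_of_card_le {s : Multiset ℝ} {k : ℕ} (h : Multiset.card s ≤ k) : nthL s k = 0 := by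
  apply List.getD_eq_default
  rw [srt_length]; exact h

lemma sorted_getElem_le {l : List ℝ} (hl : l.Pairwise (· ≥ ·)) {i j : ℕ} (hij : i ≤ j)
    (hj : j < l.length) : l[j] ≤ l[i] := by
  rcases eq_or_lt_of_le hij with rfl | hij
  · exact le_refl _
  · exact hl.rel_get_of_lt hij

/-- P1 : if the k-th entry is < h, at most k entries are ≥ h -/
lemma countP_le_of_lt {l : List ℝ} (hl : l.Pairwise (· ≥ ·)) {k : ℕ} (hk : k < l.length)
    {h : ℝ} (hh : l[k] < h) : l.countP (fun x => decide (h ≤ x)) ≤ k := by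
  have hsplit : l = l.take k ++ l.drop k := (List.take_append_drop k l).symm
  rw [hsplit, List.countP_append]
  have h2 : (l.drop k).countP (fun x => decide (h ≤ x)) = 0 := by
    rw [List.countP_eq_zero]
    intro a ha
    rcases List.mem_iff_getElem.1 ha with ⟨i, hi, rfl⟩
    simp only [List.getElem_drop]
    have hi2 : i < l.length - k := by simpa [List.length_drop] using hi
    have : l[k + i]'(by omega) ≤ l[k] := sorted_getElem_le hl (Nat.le_add_right _ _) (by omega)
    simp only [decide_eq_true_eq]
    push_neg
    exact lt_of_le_of_lt this hh
  have h1 : (l.take k).countP (fun x => decide (h ≤ x)) ≤ k :=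
    le_trans (List.countP_le_length) (by simp)
  omega

/-- P2 : if h ≤ k-th entry, at least k+1 entries are ≥ h -/
lemma le_countP_of_le {l : List ℝ} (hl : l.Pairwise (· ≥ ·)) {k : ℕ} (hk : k < l.length)
    {h : ℝ} (hh : h ≤ l[k]) : k + 1 ≤ l.countP (fun x => decide (h ≤ x)) := by
  have hsplit : l = l.take (k+1) ++ l.drop (k+1) := (List.take_append_drop (k+1) l).symm
  conv_rhs => rw [hsplit]
  rw [List.countP_append]
  have h1 : (l.take (k+1)).countP (fun x => decide (h ≤ x)) = k + 1 := by
    rw [List.countP_eq_length.2, List.length_take]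
    · omega
    · intro a ha
      rcases List.mem_iff_getElem.1 ha with ⟨i, hi, rfl⟩
      have hi' : i < k + 1 := by simp [List.length_take] at hi; omega
      simp only [List.getElem_take, decide_eq_true_eq]
      exact le_trans hh (sorted_getElem_le hl (by omega) (by omega))
  omega

lemma countP_filter_eq (s : Multiset ℝ) (h : ℝ) :
    Multiset.card (s.filter (fun x => h ≤ x)) = (srt s).countP (fun x => decide (h ≤ x)) := by
  rw [← Multiset.countP_eq_card_filter, ← srt_coe s, Multiset.coe_countP, srt_coe]

lemma nthL_nonneg {s : Multiset ℝ} (hs : ∀ x ∈ s, 0 ≤ x) (k : ℕ) : 0 ≤ nthL s k := by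
  unfold nthL
  rcases lt_or_ge k (srt s).length with hk | hk
  · rw [List.getD_eq_getElem _ _ hk]
    apply hs
    have h1 : (srt s)[k] ∈ srt s := List.getElem_mem _
    have h2 : (srt s)[k] ∈ ((srt s : List ℝ) : Multiset ℝ) := by exact_mod_cast h1
    rwa [srt_coe] at h2
  · rw [List.getD_eq_default _ _ hk]

/-- landscape-style sSup equals nthL for nonneg multisets -/
lemma sSup_eq_nthL (s : Multiset ℝ) (hs : ∀ x ∈ s, 0 ≤ x) (k : ℕ) :
    sSup {h : ℝ | 0 < h ∧ k + 1 ≤ Multiset.card (s.filter (fun x => h ≤ x))} = nthL s k := by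
  rcases lt_or_ge k (srt s).length with hk | hk
  · have hveq : nthL s k = (srt s)[k] := List.getD_eq_getElem _ _ hk
    have hv0 : 0 ≤ (srt s)[k] := by rw [← hveq]; exact nthL_nonneg hs k
    rcases eq_or_lt_of_le hv0 with hv0 | hv0
    · -- v = 0 : set is empty
      have hempty : {h : ℝ | 0 < h ∧ k + 1 ≤ Multiset.card (s.filter (fun x => h ≤ x))} = ∅ := by
        ext h
        simp only [Set.mem_setOf_eq, Set.mem_empty_iff_false, iff_false, not_and]
        intro hh0 hcard
        rw [countP_filter_eq] at hcard
        have hlt : (srt s)[k] < h := by rw [← hv0]; exact hh0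
        have := countP_le_of_lt (srt_sorted s) hk hlt
        omega
      rw [hempty, Real.sSup_empty, hveq, ← hv0]
    · -- v > 0 : v is the greatest element
      rw [hveq]
      apply IsGreatest.csSup_eq
      constructor
      · refine ⟨hv0, ?_⟩
        rw [countP_filter_eq]
        exact le_countP_of_le (srt_sorted s) hk (le_refl _)
      · intro h hh
        obtain ⟨hh0, hcard⟩ := hh
        rw [countP_filter_eq] at hcard
        by_contra hlt
        push_neg at hlt
        have := countP_le_of_lt (srt_sorted s) hk hlt
        omega
  · -- k ≥ length : set is empty and nthL = 0
    have hcs : Multiset.card s ≤ k := by rw [← srt_length]; exact hk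
    have hempty : {h : ℝ | 0 < h ∧ k + 1 ≤ Multiset.card (s.filter (fun x => h ≤ x))} = ∅ := by
      ext h
      simp only [Set.mem_setOf_eq, Set.mem_empty_iff_false, iff_false, not_and]
      intro _ hcard
      have : Multiset.card (s.filter fun x => h ≤ x) ≤ Multiset.card s :=
        Multiset.card_le_card (Multiset.filter_le _ s)
      omega
    rw [hempty, Real.sSup_empty, nthL_of_card_le hcs]

-- structure of sorted lists
lemma srt_erase {s : Multiset ℝ} (hs : s ≠ 0) :
    srt s = nthL s 0 :: srt (s.erase (nthL s 0)) := by
  have hne : srt s ≠ [] := by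
    intro h
    apply hs
    rw [← srt_coe s, h]; rfl
  rcases hl : srt s with _ | ⟨a, tl⟩
  · exact absurd hl hne
  have ha : nthL s 0 = a := by rw [nthL, hl]; rfl
  have hcoe : s = a ::ₘ (tl : Multiset ℝ) := by
    rw [← srt_coe s, hl]; rfl
  have herase : s.erase a = (tl : Multiset ℝ) := by
    rw [hcoe, Multiset.erase_cons_head]
  have htl : srt (tl : Multiset ℝ) = tl :=
    srt_unique rfl (by have := srt_sorted s; rw [hl] at this; exact this.of_cons)
  rw [ha, herase, htl]

lemma nthL_zero_mem {s : Multiset ℝ} (hs : s ≠ 0) : nthL s 0 ∈ s := by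
  have h := srt_erase hs
  have h1 : nthL s 0 ∈ srt s := by rw [h]; exact List.mem_cons_self
  have h2 : nthL s 0 ∈ ((srt s : List ℝ) : Multiset ℝ) := by exact_mod_cast h1
  rwa [srt_coe] at h2

lemma le_nthL_zero {s : Multiset ℝ} {x : ℝ} (hx : x ∈ s) : x ≤ nthL s 0 := by
  have hs : s ≠ 0 := fun h => by simp [h] at hx
  have h := srt_erase hs
  have hx' : x ∈ srt s := by rw [← srt_coe s] at hx; exact_mod_cast hx
  rw [h] at hx'
  rcases List.mem_cons.1 hx' with rfl | hx'
  · exact le_refl _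
  · have hsorted := srt_sorted s
    rw [h] at hsorted
    exact (List.pairwise_cons.1 hsorted).1 x hx'

lemma nthL_succ {s : Multiset ℝ} (hs : s ≠ 0) (k : ℕ) :
    nthL s (k + 1) = nthL (s.erase (nthL s 0)) k := by
  rw [nthL, srt_erase hs, List.getD_cons_succ]; rfl

lemma swap_ineq' {a a₁ b b₁ : ℝ} (ha : a₁ ≤ a) (hb : b₁ ≤ b) :
    |a - b| + |a₁ - b₁| ≤ |a - b₁| + |a₁ - b| := by
  rcases abs_cases (a - b) with ⟨e1, s1⟩ | ⟨e1, s1⟩ <;>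
  rcases abs_cases (a₁ - b₁) with ⟨e2, s2⟩ | ⟨e2, s2⟩ <;>
  rcases abs_cases (a - b₁) with ⟨e3, s3⟩ | ⟨e3, s3⟩ <;>
  rcases abs_cases (a₁ - b) with ⟨e4, s4⟩ | ⟨e4, s4⟩ <;> linarith

/-- the ℓ¹ rearrangement contraction -/
lemma contraction (M : Multiset (ℝ × ℝ)) :
    ∑ k ∈ Finset.range (Multiset.card M),
        |nthL (M.map Prod.fst) k - nthL (M.map Prod.snd) k|
      ≤ (M.map fun p => |p.1 - p.2|).sum := by
  suffices H : ∀ (n : ℕ) (M : Multiset (ℝ × ℝ)), Multiset.card M = n →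
      ∑ k ∈ Finset.range (Multiset.card M),
          |nthL (M.map Prod.fst) k - nthL (M.map Prod.snd) k|
        ≤ (M.map fun p => |p.1 - p.2|).sum by exact H _ M rfl
  intro n
  induction n with
  | zero =>
    intro M hcard
    rw [Multiset.card_eq_zero] at hcard
    simp [hcard]
  | succ n IH =>
    intro M hcard
    have hM0 : M ≠ 0 := by
      intro h; rw [h] at hcard; simp at hcard
    have hF0 : M.map Prod.fst ≠ 0 := by simpa using hM0
    have hG0 : M.map Prod.snd ≠ 0 := by simpa using hM0
    set a := nthL (M.map Prod.fst) 0 with ha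
    set b := nthL (M.map Prod.snd) 0 with hb
    obtain ⟨p, hpM, hp1⟩ := Multiset.mem_map.1 (nthL_zero_mem hF0)
    obtain ⟨q, hqM, hq2⟩ := Multiset.mem_map.1 (nthL_zero_mem hG0)
    by_cases hr : ∃ r ∈ M, r.1 = a ∧ r.2 = b
    · obtain ⟨r, hrM, hr1, hr2⟩ := hr
      set R := M.erase r with hR
      have hMR : M = r ::ₘ R := (Multiset.cons_erase hrM).symm
      have hcardR : Multiset.card R = n := by
        rw [hMR] at hcard; simpa using hcard
      have hFe : (M.map Prod.fst).erase a = R.map Prod.fst := by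
        rw [hMR, Multiset.map_cons, hr1, Multiset.erase_cons_head]
      have hGe : (M.map Prod.snd).erase b = R.map Prod.snd := by
        rw [hMR, Multiset.map_cons, hr2, Multiset.erase_cons_head]
      rw [hcard, Finset.sum_range_succ']
      have hstep : ∀ k, nthL (M.map Prod.fst) (k + 1) = nthL (R.map Prod.fst) k := by
        intro k; rw [nthL_succ hF0, ← ha, hFe]
      have hstep' : ∀ k, nthL (M.map Prod.snd) (k + 1) = nthL (R.map Prod.snd) k := by
        intro k; rw [nthL_succ hG0, ← hb, hGe]
      have hsum : (M.map fun p => |p.1 - p.2|).sum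
          = |a - b| + (R.map fun p => |p.1 - p.2|).sum := by
        rw [hMR, Multiset.map_cons, Multiset.sum_cons, hr1, hr2]
      rw [hsum]
      have hIHR := IH R hcardR
      rw [hcardR] at hIHR
      calc ∑ k ∈ Finset.range n, |nthL (M.map Prod.fst) (k+1) - nthL (M.map Prod.snd) (k+1)|
            + |nthL (M.map Prod.fst) 0 - nthL (M.map Prod.snd) 0|
          = ∑ k ∈ Finset.range n, |nthL (R.map Prod.fst) k - nthL (R.map Prod.snd) k|
            + |a - b| := by
            rw [← ha, ← hb]
            congr 1
            exact Finset.sum_congr rfl fun k _ => by rw [hstep, hstep']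
        _ ≤ (R.map fun p => |p.1 - p.2|).sum + |a - b| := by linarith [hIHR]
        _ = |a - b| + (R.map fun p => |p.1 - p.2|).sum := by ring
    · -- p ≠ q, swap argument
      have hpq : p ≠ q := by
        intro h
        exact hr ⟨p, hpM, hp1, by rw [h]; exact hq2⟩
      have hqMp : q ∈ M.erase p := (Multiset.mem_erase_of_ne (Ne.symm hpq)).2 hqM
      set R := (M.erase p).erase q with hRdef
      have hMp : M.erase p = q ::ₘ R := (Multiset.cons_erase hqMp).symm
      have hMR : M = p ::ₘ q ::ₘ R := by
        rw [← hMp]; exact (Multiset.cons_erase hpM).symm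
      have hcardR : Multiset.card R + 1 = n := by
        rw [hMR] at hcard; simp at hcard; omega
      set N := (q.1, p.2) ::ₘ R with hN
      have hcardN : Multiset.card N = n := by simp [hN, hcardR]
      have hFe : (M.map Prod.fst).erase a = N.map Prod.fst := by
        rw [hMR, Multiset.map_cons, Multiset.map_cons, hp1, Multiset.erase_cons_head,
          hN, Multiset.map_cons]
      have hGe : (M.map Prod.snd).erase b = N.map Prod.snd := by
        rw [hMR, Multiset.map_cons, Multiset.map_cons, hq2, Multiset.cons_swap,
          Multiset.erase_cons_head, hN, Multiset.map_cons]
      rw [hcard, Finset.sum_range_succ']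
      have hstep : ∀ k, nthL (M.map Prod.fst) (k + 1) = nthL (N.map Prod.fst) k := by
        intro k; rw [nthL_succ hF0, ← ha, hFe]
      have hstep' : ∀ k, nthL (M.map Prod.snd) (k + 1) = nthL (N.map Prod.snd) k := by
        intro k; rw [nthL_succ hG0, ← hb, hGe]
      have hIH := IH N hcardN
      rw [hcardN] at hIH
      have hNsum : (N.map fun p => |p.1 - p.2|).sum
          = |q.1 - p.2| + (R.map fun p => |p.1 - p.2|).sum := by
        rw [hN, Multiset.map_cons, Multiset.sum_cons]
      have hMsum : (M.map fun p => |p.1 - p.2|).sum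
          = |a - p.2| + |q.1 - b| + (R.map fun p => |p.1 - p.2|).sum := by
        rw [hMR, Multiset.map_cons, Multiset.map_cons, Multiset.sum_cons, Multiset.sum_cons,
          hp1, hq2]; ring
      have hq1a : q.1 ≤ a := le_nthL_zero (Multiset.mem_map_of_mem Prod.fst hqM)
      have hp2b : p.2 ≤ b := le_nthL_zero (Multiset.mem_map_of_mem Prod.snd hpM)
      have hswap : |a - b| + |q.1 - p.2| ≤ |a - p.2| + |q.1 - b| := swap_ineq' hq1a hp2b
      calc ∑ k ∈ Finset.range n, |nthL (M.map Prod.fst) (k+1) - nthL (M.map Prod.snd) (k+1)|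
            + |nthL (M.map Prod.fst) 0 - nthL (M.map Prod.snd) 0|
          = ∑ k ∈ Finset.range n, |nthL (N.map Prod.fst) k - nthL (N.map Prod.snd) k|
            + |a - b| := by
            rw [← ha, ← hb]
            congr 1
            exact Finset.sum_congr rfl fun k _ => by rw [hstep, hstep']
        _ ≤ (N.map fun p => |p.1 - p.2|).sum + |a - b| := by linarith
        _ = |a - b| + |q.1 - p.2| + (R.map fun p => |p.1 - p.2|).sum := by
            rw [hNsum]; ring
        _ ≤ |a - p.2| + |q.1 - b| + (R.map fun p => |p.1 - p.2|).sum := by linarith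
        _ = (M.map fun p => |p.1 - p.2|).sum := hMsum.symm

-- padding and corollaries
lemma nthL_eq_zero_of_all_zero {s : Multiset ℝ} (hs : ∀ x ∈ s, x = 0) (k : ℕ) :
    nthL s k = 0 := by
  unfold nthL
  rcases lt_or_ge k (srt s).length with hk | hk
  · rw [List.getD_eq_getElem _ _ hk]
    apply hs
    have h1 : (srt s)[k] ∈ srt s := List.getElem_mem _
    have h2 : (srt s)[k] ∈ ((srt s : List ℝ) : Multiset ℝ) := by exact_mod_cast h1
    rwa [srt_coe] at h2
  · exact List.getD_eq_default _ _ hk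

lemma srt_pad {s : Multiset ℝ} (hs : ∀ x ∈ s, 0 ≤ x) (j : ℕ) :
    srt (s + Multiset.replicate j 0) = srt s ++ List.replicate j 0 := by
  apply srt_unique
  · have h1 : ((srt s ++ List.replicate j 0 : List ℝ) : Multiset ℝ)
        = ((srt s : List ℝ) : Multiset ℝ) + ((List.replicate j (0:ℝ) : List ℝ) : Multiset ℝ) := by
      exact_mod_cast rfl
    rw [h1, srt_coe, Multiset.coe_replicate]
  · rw [List.pairwise_append]
    refine ⟨srt_sorted s, ?_, ?_⟩
    · rw [List.pairwise_replicate]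
      right; exact le_refl _
    · intro a ha b hb
      rw [List.eq_of_mem_replicate hb]
      apply hs
      have h2 : a ∈ ((srt s : List ℝ) : Multiset ℝ) := by exact_mod_cast ha
      rwa [srt_coe] at h2

lemma nthL_pad {s : Multiset ℝ} (hs : ∀ x ∈ s, 0 ≤ x) (j k : ℕ) :
    nthL (s + Multiset.replicate j 0) k = nthL s k := by
  unfold nthL
  rw [srt_pad hs j]
  rcases lt_or_ge k (srt s).length with hk | hk
  · exact List.getD_append _ _ _ _ hk
  · rw [List.getD_append_right _ _ _ _ hk, List.getD_eq_default _ _ hk]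
    rcases lt_or_ge (k - (srt s).length) j with h | h
    · rw [List.getD_eq_getElem _ _ (by simpa using h), List.getElem_replicate]
    · exact List.getD_eq_default _ _ (by simpa using h)

lemma contraction_range (M : Multiset (ℝ × ℝ)) (n : ℕ) :
    ∑ k ∈ Finset.range n, |nthL (M.map Prod.fst) k - nthL (M.map Prod.snd) k|
      ≤ (M.map fun p => |p.1 - p.2|).sum := by
  have hz : ∀ k, Multiset.card M ≤ k →
      |nthL (M.map Prod.fst) k - nthL (M.map Prod.snd) k| = 0 := by
    intro k hk
    rw [nthL_of_card_le (by simpa using hk), nthL_of_card_le (by simpa using hk)]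
    simp
  calc ∑ k ∈ Finset.range n, |nthL (M.map Prod.fst) k - nthL (M.map Prod.snd) k|
      ≤ ∑ k ∈ Finset.range (max n (Multiset.card M)),
          |nthL (M.map Prod.fst) k - nthL (M.map Prod.snd) k| :=
        Finset.sum_le_sum_of_subset_of_nonneg
          (Finset.range_subset_range.2 (le_max_left _ _)) (fun _ _ _ => abs_nonneg _)
    _ = ∑ k ∈ Finset.range (Multiset.card M),
          |nthL (M.map Prod.fst) k - nthL (M.map Prod.snd) k| := by
        refine (Finset.sum_subset (Finset.range_subset_range.2 (le_max_right _ _)) ?_).symm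
        intro x hx hx'
        simp only [Finset.mem_range] at hx hx'
        exact hz x (by omega)
    _ ≤ _ := contraction M

lemma nthL_map_abs_sub_le {ι : Type*} (s : Multiset ι) (f g : ι → ℝ) (k : ℕ) :
    |nthL (s.map f) k - nthL (s.map g) k| ≤ (s.map fun i => |f i - g i|).sum := by
  set M : Multiset (ℝ × ℝ) := s.map (fun i => (f i, g i)) with hM
  have hF : M.map Prod.fst = s.map f := by rw [hM, Multiset.map_map]; rfl
  have hG : M.map Prod.snd = s.map g := by rw [hM, Multiset.map_map]; rfl
  have hcost : (M.map fun p => |p.1 - p.2|).sum = (s.map fun i => |f i - g i|).sum := by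
    rw [hM, Multiset.map_map]; rfl
  rw [← hF, ← hG, ← hcost]
  calc |nthL (M.map Prod.fst) k - nthL (M.map Prod.snd) k|
      ≤ ∑ i ∈ Finset.range (k + 1), |nthL (M.map Prod.fst) i - nthL (M.map Prod.snd) i| :=
        Finset.single_le_sum
          (f := fun i => |nthL (M.map Prod.fst) i - nthL (M.map Prod.snd) i|)
          (fun _ _ => abs_nonneg _) (Finset.self_mem_range_succ k)
    _ ≤ _ := contraction_range M (k + 1)

-- general tent
def tentR (a b t : ℝ) : ℝ := max 0 (min (t - a) (b - t))

lemma tent_eq_tentR (x : Pt) : tent x = tentR x.1.1 x.1.2 := rfl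

lemma tentR_nonneg (a b t : ℝ) : 0 ≤ tentR a b t := le_max_left _ _

lemma tentR_continuous (a b : ℝ) : Continuous (tentR a b) := by
  unfold tentR
  exact continuous_const.max ((continuous_id.sub continuous_const).min
    (continuous_const.sub continuous_id))

lemma tentR_eq_zero {a b t : ℝ} (h : t ∉ Set.Icc a b) : tentR a b t = 0 := by
  rw [Set.mem_Icc, not_and_or, not_le, not_le] at h
  unfold tentR
  rcases h with h | h
  · rw [max_eq_left]
    exact le_trans (min_le_left _ _) (by linarith)
  · rw [max_eq_left]
    exact le_trans (min_le_right _ _) (by linarith)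

lemma cont_integrable {f : ℝ → ℝ} (hc : Continuous f) (a b : ℝ)
    (h0 : ∀ t ∉ Set.Icc a b, f t = 0) : Integrable f :=
  hc.integrable_of_hasCompactSupport (HasCompactSupport.intro isCompact_Icc h0)

lemma tentR_integrable (a b : ℝ) : Integrable (tentR a b) :=
  cont_integrable (tentR_continuous a b) a b (fun _ h => tentR_eq_zero h)

lemma integral_tentR {a b : ℝ} (hab : a ≤ b) : ∫ t, tentR a b t = (b - a) ^ 2 / 4 := by
  set c := (a + b) / 2 with hc
  have hac : a ≤ c := by rw [hc]; linarith
  have hcb : c ≤ b := by rw [hc]; linarith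
  rw [← MeasureTheory.setIntegral_eq_integral_of_forall_compl_eq_zero
    (fun t ht => tentR_eq_zero ht)]
  rw [MeasureTheory.integral_Icc_eq_integral_Ioc, ← intervalIntegral.integral_of_le hab]
  have h1 : IntervalIntegrable (tentR a b) volume a c :=
    (tentR_continuous a b).intervalIntegrable a c
  have h2 : IntervalIntegrable (tentR a b) volume c b :=
    (tentR_continuous a b).intervalIntegrable c b
  rw [← intervalIntegral.integral_add_adjacent_intervals h1 h2]
  have e1 : ∫ t in a..c, tentR a b t = ∫ t in a..c, (t - a) := by
    apply intervalIntegral.integral_congr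
    intro t ht
    rw [Set.uIcc_of_le hac, Set.mem_Icc] at ht
    unfold tentR
    rw [min_eq_left (by rcases ht with ⟨u1, u2⟩; linarith), max_eq_right (by linarith [ht.1])]
  have e2 : ∫ t in c..b, tentR a b t = ∫ t in c..b, (b - t) := by
    apply intervalIntegral.integral_congr
    intro t ht
    rw [Set.uIcc_of_le hcb, Set.mem_Icc] at ht
    unfold tentR
    rw [min_eq_right (by rcases ht with ⟨u1, u2⟩; linarith), max_eq_right (by linarith [ht.2])]
  have v1 : ∫ t in a..c, (t - a) = (c ^ 2 - a ^ 2) / 2 - (c - a) * a := by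
    rw [intervalIntegral.integral_sub intervalIntegral.intervalIntegrable_id
      (intervalIntegrable_const (c := a)), integral_id, intervalIntegral.integral_const]
    simp [smul_eq_mul]
  have v2 : ∫ t in c..b, (b - t) = (b - c) * b - (b ^ 2 - c ^ 2) / 2 := by
    rw [intervalIntegral.integral_sub (intervalIntegrable_const (c := b))
      intervalIntegral.intervalIntegrable_id, integral_id, intervalIntegral.integral_const]
    simp [smul_eq_mul]
  rw [e1, e2, v1, v2, hc]
  ring

lemma abs_sub_eq (u v : ℝ) : |u - v| = u + v - 2 * min u v := by
  rcases le_total u v with h | h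
  · rw [abs_of_nonpos (by linarith), min_eq_left h]; ring
  · rw [abs_of_nonneg (by linarith), min_eq_right h]; ring

/-- the key pairwise integral bound -/
lemma integral_abs_tent_sub_le (x y : Pt) :
    ∫ t, |tent x t - tent y t| ≤ drk x.1 y.1 / 2 := by
  have hx : x.1.1 ≤ x.1.2 := le_of_lt x.2
  have hy : y.1.1 ≤ y.1.2 := le_of_lt y.2
  set f := tentR x.1.1 x.1.2
  set g := tentR y.1.1 y.1.2
  have hfi : Integrable f := tentR_integrable _ _
  have hgi : Integrable g := tentR_integrable _ _
  have hmc : Continuous (fun t => min (f t) (g t)) :=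
    (tentR_continuous _ _).min (tentR_continuous _ _)
  have hm0 : ∀ t ∉ Set.Icc x.1.1 x.1.2, min (f t) (g t) = 0 := by
    intro t ht
    have h1 : f t = 0 := tentR_eq_zero ht
    have := tentR_nonneg y.1.1 y.1.2 t
    rw [min_eq_left]; exact h1
    rw [h1]; exact this
  have hmi : Integrable (fun t => min (f t) (g t)) := cont_integrable hmc _ _ hm0
  have heq : (fun t => |tent x t - tent y t|)
      = fun t => f t + g t - 2 * min (f t) (g t) := by
    funext t
    rw [tent_eq_tentR, tent_eq_tentR]
    exact abs_sub_eq _ _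
  rw [heq]
  have hsplit : ∫ t, (f t + g t - 2 * min (f t) (g t))
      = (∫ t, (f t + g t)) - ∫ t, 2 * min (f t) (g t) :=
    MeasureTheory.integral_sub (hfi.add hgi) (hmi.const_mul 2)
  have hadd : ∫ t, (f t + g t) = (∫ t, f t) + ∫ t, g t := MeasureTheory.integral_add hfi hgi
  have hcm : ∫ t, 2 * min (f t) (g t) = 2 * ∫ t, min (f t) (g t) :=
    MeasureTheory.integral_const_mul 2 _
  have hIf : ∫ t, f t = (x.1.2 - x.1.1) ^ 2 / 4 := integral_tentR hx
  have hIg : ∫ t, g t = (y.1.2 - y.1.1) ^ 2 / 4 := integral_tentR hy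
  rw [hsplit, hadd, hcm, hIf, hIg]
  have hmin_ge : (max (min x.1.2 y.1.2 - max x.1.1 y.1.1) 0) ^ 2 / 4
      ≤ ∫ t, min (f t) (g t) := by
    rcases le_total (max x.1.1 y.1.1) (min x.1.2 y.1.2) with hab | hab
    · rw [max_eq_left (by linarith)]
      have hple : ∀ t, tentR (max x.1.1 y.1.1) (min x.1.2 y.1.2) t ≤ min (f t) (g t) := by
        intro t
        have A1 : t - max x.1.1 y.1.1 ≤ t - x.1.1 := by
          have := le_max_left x.1.1 y.1.1; linarith
        have A2 : min x.1.2 y.1.2 - t ≤ x.1.2 - t := by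
          have := min_le_left x.1.2 y.1.2; linarith
        have B1 : t - max x.1.1 y.1.1 ≤ t - y.1.1 := by
          have := le_max_right x.1.1 y.1.1; linarith
        have B2 : min x.1.2 y.1.2 - t ≤ y.1.2 - t := by
          have := min_le_right x.1.2 y.1.2; linarith
        exact le_min (max_le_max (le_refl 0) (min_le_min A1 A2))
          (max_le_max (le_refl 0) (min_le_min B1 B2))
      calc (min x.1.2 y.1.2 - max x.1.1 y.1.1) ^ 2 / 4
          = ∫ t, tentR (max x.1.1 y.1.1) (min x.1.2 y.1.2) t := (integral_tentR hab).symm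
        _ ≤ _ := MeasureTheory.integral_mono (tentR_integrable _ _) hmi hple
    · rw [max_eq_right (by linarith)]
      simp only [ne_eq, OfNat.ofNat_ne_zero, not_false_eq_true, zero_pow, zero_div]
      exact MeasureTheory.integral_nonneg fun t => le_min (tentR_nonneg _ _ _) (tentR_nonneg _ _ _)
  unfold drk
  nlinarith [hmin_ge]


-- ===== landscape characterization and integrability =====

lemma tent_nonneg (x : Pt) (t : ℝ) : 0 ≤ tent x t := le_max_left _ _

lemma landscape_eq (α : Multiset Pt) (k : ℕ) (t : ℝ) :
    landscape α (k + 1) t = nthL (α.map fun x => tent x t) k := by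
  unfold landscape
  have hcard : ∀ h : ℝ, Multiset.card (α.filter fun x => h ≤ tent x t)
      = Multiset.card ((α.map fun x => tent x t).filter fun v => h ≤ v) := by
    intro h
    rw [Multiset.filter_map, Multiset.card_map]
    exact congrArg Multiset.card (Multiset.filter_congr fun x _ => Iff.rfl)
  have hmain := sSup_eq_nthL (α.map fun x => tent x t) (fun v hv => by
    obtain ⟨x, _, rfl⟩ := Multiset.mem_map.1 hv
    exact tent_nonneg x t) k
  rw [← hmain]
  congr 1
  ext h
  simp only [Set.mem_setOf_eq]
  rw [hcard h]

lemma tent_lip (x : Pt) (t t' : ℝ) : |tent x t - tent x t'| ≤ |t - t'| := by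
  have h1 : |tent x t - tent x t'|
      ≤ |min (t - x.1.1) (x.1.2 - t) - min (t' - x.1.1) (x.1.2 - t')| := by
    have := abs_max_sub_max_le_max (0:ℝ) (min (t - x.1.1) (x.1.2 - t)) 0
      (min (t' - x.1.1) (x.1.2 - t'))
    simpa [tent] using this
  have h2 := abs_min_sub_min_le_max (t - x.1.1) (x.1.2 - t) (t' - x.1.1) (x.1.2 - t')
  have e1 : |(t - x.1.1) - (t' - x.1.1)| = |t - t'| := by congr 1; ring
  have e2 : |(x.1.2 - t) - (x.1.2 - t')| = |t' - t| := by congr 1; ring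
  refine h1.trans (h2.trans ?_)
  rw [e1, e2, abs_sub_comm t' t, max_self]

lemma nthL_tent_lip (α : Multiset Pt) (k : ℕ) (t t' : ℝ) :
    |nthL (α.map fun x => tent x t) k - nthL (α.map fun x => tent x t') k|
      ≤ (Multiset.card α : ℝ) * |t - t'| := by
  refine (nthL_map_abs_sub_le α _ _ k).trans ?_
  calc (α.map fun x => |tent x t - tent x t'|).sum
      ≤ (α.map fun _ => |t - t'|).sum :=
        Multiset.sum_map_le_sum_map _ _ (fun i _ => tent_lip i t t')
    _ = (Multiset.card α : ℝ) * |t - t'| := by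
        rw [Multiset.map_const', Multiset.sum_replicate, nsmul_eq_mul]

lemma nthL_tent_continuous (α : Multiset Pt) (k : ℕ) :
    Continuous fun t => nthL (α.map fun x => tent x t) k := by
  apply LipschitzWith.continuous (K := Multiset.card α)
  apply LipschitzWith.of_dist_le_mul
  intro t t'
  rw [Real.dist_eq, Real.dist_eq]
  have := nthL_tent_lip α k t t'
  refine this.trans_eq ?_
  norm_num

lemma nthL_tent_integrable (α : Multiset Pt) (k : ℕ) :
    Integrable (fun t => nthL (α.map fun x => tent x t) k) := by
  set R := (α.map fun x => |x.1.1| + |x.1.2|).sum with hR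
  apply cont_integrable (nthL_tent_continuous α k) (-R) R
  intro t ht
  apply nthL_eq_zero_of_all_zero
  intro v hv
  obtain ⟨x, hx, rfl⟩ := Multiset.mem_map.1 hv
  have hbound : |x.1.1| + |x.1.2| ≤ R := by
    refine Multiset.single_le_sum (fun y hy => ?_) _ (Multiset.mem_map_of_mem _ hx)
    obtain ⟨z, _, rfl⟩ := Multiset.mem_map.1 hy
    positivity
  rw [Set.mem_Icc, not_and_or, not_le, not_le] at ht
  rw [tent_eq_tentR]
  apply tentR_eq_zero
  rw [Set.mem_Icc, not_and_or, not_le, not_le]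
  rcases ht with h | h
  · left
    have h1 := abs_nonneg x.1.2
    have h2 := neg_abs_le x.1.1
    linarith
  · right
    have h1 := abs_nonneg x.1.1
    have h2 := le_abs_self x.1.2
    linarith

-- ===== multiset sums of integrable functions =====

lemma multiset_integrable {ι : Type*} (s : Multiset ι) (F : ι → ℝ → ℝ)
    (h : ∀ i ∈ s, Integrable (F i)) :
    Integrable (fun t => (s.map fun i => F i t).sum) := by
  induction s using Multiset.induction_on with
  | empty => simpa using MeasureTheory.integrable_zero ℝ ℝ (volume : MeasureTheory.Measure ℝ)
  | cons a s ih =>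
    simp only [Multiset.map_cons, Multiset.sum_cons]
    exact (h a (Multiset.mem_cons_self a s)).add
      (ih fun i hi => h i (Multiset.mem_cons_of_mem hi))

lemma multiset_integral {ι : Type*} (s : Multiset ι) (F : ι → ℝ → ℝ)
    (h : ∀ i ∈ s, Integrable (F i)) :
    ∫ t, (s.map fun i => F i t).sum = (s.map fun i => ∫ t, F i t).sum := by
  induction s using Multiset.induction_on with
  | empty => simp
  | cons a s ih =>
    simp only [Multiset.map_cons, Multiset.sum_cons]
    have hadd : ∫ t, (F a t + (s.map fun i => F i t).sum)
        = (∫ t, F a t) + ∫ t, (s.map fun i => F i t).sum :=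
      MeasureTheory.integral_add (h a (Multiset.mem_cons_self a s))
        (multiset_integrable s F (fun i hi => h i (Multiset.mem_cons_of_mem hi)))
    rw [hadd, ih (fun i hi => h i (Multiset.mem_cons_of_mem hi))]

lemma sum_map_half {ι : Type*} (s : Multiset ι) (f : ι → ℝ) :
    (s.map fun i => f i / 2).sum = (s.map f).sum / 2 := by
  induction s using Multiset.induction_on with
  | empty => simp
  | cons a s ih =>
    simp only [Multiset.map_cons, Multiset.sum_cons, ih]
    ring

/-- Landscape stability for finite persistence diagrams:
`‖Λα − Λβ‖₁ ≤ ½ W₁^rk(α, β)`. -/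
theorem stmt8 (α β : Multiset Pt) :
    lambdaDistFin α β ≤ (1 / 2) * W1fin drkQ α β := by
  have htent_int : ∀ x : Pt, Integrable (fun t => tent x t) := fun x =>
    tentR_integrable x.1.1 x.1.2
  have habs_int : ∀ p : Pt × Pt, Integrable (fun t => |tent p.1 t - tent p.2 t|) :=
    fun p => ((htent_int p.1).sub (htent_int p.2)).abs
  have hkey : ∀ m : Multiset (Pt × Pt), m.map Prod.fst ≤ α → m.map Prod.snd ≤ β →
      lambdaDistFin α β ≤ (1 / 2) * cost drkQ α β m := by
    intro m hmα hmβ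
    set n := Multiset.card α + Multiset.card β with hn
    set G : ℝ → ℝ := fun t => (m.map fun p => |tent p.1 t - tent p.2 t|).sum
      + ((α - m.map Prod.fst).map fun x => tent x t).sum
      + ((β - m.map Prod.snd).map fun y => tent y t).sum with hG
    have hfk : ∀ k, Integrable (fun t => |landscape α (k+1) t - landscape β (k+1) t|) := by
      intro k
      have heq : (fun t => |landscape α (k+1) t - landscape β (k+1) t|)
          = fun t => |nthL (α.map fun x => tent x t) k - nthL (β.map fun x => tent x t) k| := by
        funext t; rw [landscape_eq, landscape_eq]
      rw [heq]
      exact ((nthL_tent_integrable α k).sub (nthL_tent_integrable β k)).abs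
    have hintA : Integrable (fun t => (m.map fun p => |tent p.1 t - tent p.2 t|).sum) :=
      multiset_integrable m _ (fun p _ => habs_int p)
    have hintB : Integrable (fun t => ((α - m.map Prod.fst).map fun x => tent x t).sum) :=
      multiset_integrable _ _ (fun x _ => htent_int x)
    have hintC : Integrable (fun t => ((β - m.map Prod.snd).map fun y => tent y t).sum) :=
      multiset_integrable _ _ (fun y _ => htent_int y)
    have hGint : Integrable G := (hintA.add hintB).add hintC
    -- pointwise bound
    have hpt : ∀ t, ∑ k ∈ Finset.range n,
        |landscape α (k+1) t - landscape β (k+1) t| ≤ G t := by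
      intro t
      set M : Multiset (ℝ × ℝ) := m.map (fun p => (tent p.1 t, tent p.2 t))
        + (α - m.map Prod.fst).map (fun x => (tent x t, 0))
        + (β - m.map Prod.snd).map (fun y => ((0:ℝ), tent y t)) with hM
      have hαdec : α.map (fun x => tent x t)
          = (m.map fun p => tent p.1 t) + (α - m.map Prod.fst).map (fun x => tent x t) := by
        conv_lhs => rw [← add_tsub_cancel_of_le hmα]
        rw [Multiset.map_add, Multiset.map_map]
        rfl
      have hβdec : β.map (fun y => tent y t)
          = (m.map fun p => tent p.2 t) + (β - m.map Prod.snd).map (fun y => tent y t) := by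
        conv_lhs => rw [← add_tsub_cancel_of_le hmβ]
        rw [Multiset.map_add, Multiset.map_map]
        rfl
      have hMf : M.map Prod.fst = α.map (fun x => tent x t)
          + Multiset.replicate (Multiset.card (β - m.map Prod.snd)) 0 := by
        rw [hM]
        simp only [Multiset.map_add, Multiset.map_map, Function.comp]
        rw [hαdec]
        congr 1
        exact Multiset.map_const' _ _
      have hMs : M.map Prod.snd = β.map (fun y => tent y t)
          + Multiset.replicate (Multiset.card (α - m.map Prod.fst)) 0 := by
        rw [hM]
        simp only [Multiset.map_add, Multiset.map_map, Function.comp]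
        rw [hβdec]
        rw [add_right_comm]
        congr 1
        exact Multiset.map_const' _ _
      have hαnn : ∀ v ∈ α.map (fun x => tent x t), (0:ℝ) ≤ v := by
        intro v hv
        obtain ⟨x, _, rfl⟩ := Multiset.mem_map.1 hv
        exact tent_nonneg x t
      have hβnn : ∀ v ∈ β.map (fun y => tent y t), (0:ℝ) ≤ v := by
        intro v hv
        obtain ⟨y, _, rfl⟩ := Multiset.mem_map.1 hv
        exact tent_nonneg y t
      have hk : ∀ k, |landscape α (k+1) t - landscape β (k+1) t|
          = |nthL (M.map Prod.fst) k - nthL (M.map Prod.snd) k| := by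
        intro k
        rw [landscape_eq, landscape_eq, hMf, hMs, nthL_pad hαnn, nthL_pad hβnn]
      rw [Finset.sum_congr rfl (fun k _ => hk k)]
      refine (contraction_range M n).trans_eq ?_
      rw [hM, hG]
      simp only [Multiset.map_add, Multiset.sum_add, Multiset.map_map, Function.comp]
      congr 2
      · exact congrArg Multiset.sum (Multiset.map_congr rfl (fun x _ => by
          rw [sub_zero]
          exact abs_of_nonneg (tent_nonneg x t)))
      · exact Multiset.map_congr rfl (fun y _ => by
          rw [zero_sub, abs_neg]
          exact abs_of_nonneg (tent_nonneg y t))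
    -- sum reduction
    have h1 : lambdaDistFin α β
        = ∑ k ∈ Finset.range n, ∫ t, |landscape α (k+1) t - landscape β (k+1) t| := by
      apply tsum_eq_sum
      intro k hk
      rw [Finset.mem_range, not_lt] at hk
      have hzero : (fun t => |landscape α (k+1) t - landscape β (k+1) t|) = fun _ => (0:ℝ) := by
        funext t
        rw [landscape_eq, landscape_eq,
          nthL_of_card_le (by rw [Multiset.card_map]; omega),
          nthL_of_card_le (by rw [Multiset.card_map]; omega), sub_zero, abs_zero]
      rw [hzero, MeasureTheory.integral_zero]
    have h2 : ∑ k ∈ Finset.range n, ∫ t, |landscape α (k+1) t - landscape β (k+1) t|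
        = ∫ t, ∑ k ∈ Finset.range n, |landscape α (k+1) t - landscape β (k+1) t| :=
      (MeasureTheory.integral_finset_sum _ (fun k _ => hfk k)).symm
    have h3 : ∫ t, ∑ k ∈ Finset.range n, |landscape α (k+1) t - landscape β (k+1) t|
        ≤ ∫ t, G t :=
      MeasureTheory.integral_mono
        (MeasureTheory.integrable_finset_sum _ (fun k _ => hfk k)) hGint hpt
    -- compute/bound ∫ G
    have hGsplit : ∫ t, G t
        = (∫ t, (m.map fun p => |tent p.1 t - tent p.2 t|).sum)
          + (∫ t, ((α - m.map Prod.fst).map fun x => tent x t).sum)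
          + ∫ t, ((β - m.map Prod.snd).map fun y => tent y t).sum := by
      have e1 : ∫ t, ((m.map fun p => |tent p.1 t - tent p.2 t|).sum
            + ((α - m.map Prod.fst).map fun x => tent x t).sum)
            + ((β - m.map Prod.snd).map fun y => tent y t).sum
          = (∫ t, (m.map fun p => |tent p.1 t - tent p.2 t|).sum
            + ((α - m.map Prod.fst).map fun x => tent x t).sum)
            + ∫ t, ((β - m.map Prod.snd).map fun y => tent y t).sum :=
        MeasureTheory.integral_add (hintA.add hintB) hintC
      have e2 : ∫ t, ((m.map fun p => |tent p.1 t - tent p.2 t|).sum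
            + ((α - m.map Prod.fst).map fun x => tent x t).sum)
          = (∫ t, (m.map fun p => |tent p.1 t - tent p.2 t|).sum)
            + ∫ t, ((α - m.map Prod.fst).map fun x => tent x t).sum :=
        MeasureTheory.integral_add hintA hintB
      rw [hG]
      rw [e1, e2]
    have hA : ∫ t, (m.map fun p => |tent p.1 t - tent p.2 t|).sum
        ≤ (m.map fun p => drkQ (some p.1) (some p.2) / 2).sum := by
      rw [multiset_integral m _ (fun p _ => habs_int p)]
      exact Multiset.sum_map_le_sum_map _ _ (fun p _ => integral_abs_tent_sub_le p.1 p.2)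
    have hB : ∫ t, ((α - m.map Prod.fst).map fun x => tent x t).sum
        = ((α - m.map Prod.fst).map fun x => drkQ (some x) none / 2).sum := by
      rw [multiset_integral _ _ (fun x _ => htent_int x)]
      refine congrArg Multiset.sum (Multiset.map_congr rfl (fun x _ => ?_))
      have : ∫ t, tent x t = (x.1.2 - x.1.1) ^ 2 / 4 := integral_tentR (le_of_lt x.2)
      rw [this]
      show (x.1.2 - x.1.1) ^ 2 / 4 = ((x.1.2 - x.1.1) ^ 2 / 2) / 2
      ring
    have hC : ∫ t, ((β - m.map Prod.snd).map fun y => tent y t).sum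
        = ((β - m.map Prod.snd).map fun y => drkQ none (some y) / 2).sum := by
      rw [multiset_integral _ _ (fun y _ => htent_int y)]
      refine congrArg Multiset.sum (Multiset.map_congr rfl (fun y _ => ?_))
      have : ∫ t, tent y t = (y.1.2 - y.1.1) ^ 2 / 4 := integral_tentR (le_of_lt y.2)
      rw [this]
      show (y.1.2 - y.1.1) ^ 2 / 4 = ((y.1.2 - y.1.1) ^ 2 / 2) / 2
      ring
    have hfinal : ∫ t, G t ≤ (1 / 2) * cost drkQ α β m := by
      rw [sum_map_half] at hA
      rw [sum_map_half] at hB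
      rw [sum_map_half] at hC
      rw [hGsplit, hB, hC]
      unfold cost
      linarith [hA]
    calc lambdaDistFin α β
        = ∫ t, ∑ k ∈ Finset.range n, |landscape α (k+1) t - landscape β (k+1) t| := by
          rw [h1, h2]
      _ ≤ ∫ t, G t := h3
      _ ≤ (1 / 2) * cost drkQ α β m := hfinal
  -- conclude
  have hne : {c : ℝ | ∃ m : Multiset (Pt × Pt),
      m.map Prod.fst ≤ α ∧ m.map Prod.snd ≤ β ∧ c = cost drkQ α β m}.Nonempty :=
    ⟨cost drkQ α β 0, 0, by simp, by simp, rfl⟩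
  have h2L : lambdaDistFin α β * 2 ≤ sInf {c : ℝ | ∃ m : Multiset (Pt × Pt),
      m.map Prod.fst ≤ α ∧ m.map Prod.snd ≤ β ∧ c = cost drkQ α β m} := by
    apply le_csInf hne
    intro c hc
    obtain ⟨m, hm1, hm2, rfl⟩ := hc
    linarith [hkey m hm1 hm2]
  rw [W1fin]
  linarith

end
end

section
/- Let α, β, σ be finite persistence diagrams and let d be a metric on (ℝ²_≤ ∖ Δ) ∪ {Δ}. Then W₁^d(α + σ, β + σ) = W₁^d(α, β), where + denotes multiset sum of diagrams. -/
open scoped Classical ENNReal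
open MeasureTheory Filter

noncomputable section

namespace Stmt10Aux

lemma cons_sub_cons' {γ : Type*} [DecidableEq γ] (s : γ) (A a : Multiset γ) :
    (s ::ₘ A) - (s ::ₘ a) = A - a := by
  ext t
  simp only [Multiset.count_sub, Multiset.count_cons]
  split_ifs <;> omega

lemma sub_of_cons_le {γ : Type*} [DecidableEq γ] {y : γ} {c B : Multiset γ}
    (h : y ::ₘ c ≤ B) : B - c = y ::ₘ (B - (y ::ₘ c)) := by
  ext t
  have h' := Multiset.count_le_of_le t h
  simp only [Multiset.count_cons, Multiset.count_sub] at h' ⊢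
  split_ifs at h' ⊢ <;> omega

lemma extract_mem {γ : Type*} [DecidableEq γ] {a A : Multiset γ} {s : γ}
    (h : a ≤ s ::ₘ A) (h2 : ¬ a ≤ A) : s ∈ a := by
  by_contra hs
  apply h2
  rw [Multiset.le_iff_count]
  intro t
  have ht := Multiset.count_le_of_le t h
  rw [Multiset.count_cons] at ht
  by_cases hts : t = s
  · subst hts
    simp [Multiset.count_eq_zero_of_notMem hs]
  · simpa [hts] using ht

lemma extract_erase_le {γ : Type*} [DecidableEq γ] {a A : Multiset γ} {s : γ}
    (h : a ≤ s ::ₘ A) : a.erase s ≤ A := by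
  rw [Multiset.le_iff_count]
  intro t
  have ht := Multiset.count_le_of_le t h
  rw [Multiset.count_cons] at ht
  by_cases hts : t = s
  · subst hts
    rw [Multiset.count_erase_self]
    have ht' : Multiset.count t a ≤ Multiset.count t A + 1 := by simpa using ht
    omega
  · rw [Multiset.count_erase_of_ne hts]
    simpa [hts] using ht

end Stmt10Aux

lemma cost_nonneg (d : PtD → PtD → ℝ) (hd0 : ∀ u v : PtD, 0 ≤ d u v)
    (α β : Multiset Pt) (m : Multiset (Pt × Pt)) : 0 ≤ cost d α β m := by
  unfold cost
  refine add_nonneg (add_nonneg ?_ ?_) ?_ <;>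
    refine Multiset.sum_nonneg fun x hx => ?_ <;>
    · obtain ⟨p, -, rfl⟩ := Multiset.mem_map.1 hx
      exact hd0 _ _

def Cset (d : PtD → PtD → ℝ) (α β : Multiset Pt) : Set ℝ :=
  {c : ℝ | ∃ m : Multiset (Pt × Pt),
    m.map Prod.fst ≤ α ∧ m.map Prod.snd ≤ β ∧ c = cost d α β m}

lemma W1fin_eq (d : PtD → PtD → ℝ) (α β : Multiset Pt) :
    W1fin d α β = sInf (Cset d α β) := rfl

lemma Cset_nonempty (d : PtD → PtD → ℝ) (α β : Multiset Pt) :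
    (Cset d α β).Nonempty :=
  ⟨cost d α β 0, 0, by simp, by simp, rfl⟩

lemma Cset_bdd (d : PtD → PtD → ℝ) (hd0 : ∀ u v : PtD, 0 ≤ d u v)
    (α β : Multiset Pt) : BddBelow (Cset d α β) := by
  refine ⟨0, ?_⟩
  rintro c ⟨m, -, -, rfl⟩
  exact cost_nonneg d hd0 α β m

lemma W1_cons_le (d : PtD → PtD → ℝ)
    (hd0 : ∀ u v : PtD, 0 ≤ d u v)
    (hdeq : ∀ u v : PtD, d u v = 0 ↔ u = v)
    (s : Pt) (A B : Multiset Pt) :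
    W1fin d (s ::ₘ A) (s ::ₘ B) ≤ W1fin d A B := by
  rw [W1fin_eq, W1fin_eq]
  apply le_csInf (Cset_nonempty d A B)
  rintro c ⟨m, ha, hb, rfl⟩
  apply csInf_le (Cset_bdd d hd0 _ _)
  refine ⟨(s, s) ::ₘ m, ?_, ?_, ?_⟩
  · simpa using Multiset.cons_le_cons s ha
  · simpa using Multiset.cons_le_cons s hb
  · unfold cost
    simp only [Multiset.map_cons, Multiset.sum_cons, Stmt10Aux.cons_sub_cons']
    have h0 : d (some s) (some s) = 0 := (hdeq _ _).2 rfl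
    rw [h0]
    ring

lemma W1_le_cons (d : PtD → PtD → ℝ)
    (hd0 : ∀ u v : PtD, 0 ≤ d u v)
    (hdtri : ∀ u v w : PtD, d u w ≤ d u v + d v w)
    (hdeq : ∀ u v : PtD, d u v = 0 ↔ u = v)
    (s : Pt) (A B : Multiset Pt) :
    W1fin d A B ≤ W1fin d (s ::ₘ A) (s ::ₘ B) := by
  rw [W1fin_eq, W1fin_eq]
  apply le_csInf (Cset_nonempty d _ _)
  rintro c ⟨m, ha, hb, rfl⟩
  suffices h : ∃ m' : Multiset (Pt × Pt), m'.map Prod.fst ≤ A ∧ m'.map Prod.snd ≤ B ∧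
      cost d A B m' ≤ cost d (s ::ₘ A) (s ::ₘ B) m by
    obtain ⟨m', h1, h2, h3⟩ := h
    exact le_trans (csInf_le (Cset_bdd d hd0 A B) ⟨m', h1, h2, rfl⟩) h3
  by_cases hA : m.map Prod.fst ≤ A
  · by_cases hB : m.map Prod.snd ≤ B
    · refine ⟨m, hA, hB, ?_⟩
      unfold cost
      rw [Multiset.cons_sub_of_le _ hA, Multiset.cons_sub_of_le _ hB]
      simp only [Multiset.map_cons, Multiset.sum_cons]
      have h1 := hd0 (some s) none
      have h2 := hd0 none (some s)
      linarith
    · -- extract a pair (x, s) from m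
      have hs : s ∈ m.map Prod.snd := Stmt10Aux.extract_mem hb hB
      obtain ⟨q, hq, hq2⟩ := Multiset.mem_map.1 hs
      obtain ⟨m₁, rfl⟩ := Multiset.exists_cons_of_mem hq
      simp only [Multiset.map_cons, hq2] at ha hb hA
      refine ⟨m₁, le_trans (Multiset.le_cons_self _ _) hA, ?_, ?_⟩
      · exact (Multiset.cons_le_cons_iff s).1 hb
      · unfold cost
        simp only [Multiset.map_cons, Multiset.sum_cons, hq2]
        rw [Stmt10Aux.cons_sub_cons', Multiset.cons_sub_of_le _ hA,
          Stmt10Aux.sub_of_cons_le hA]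
        simp only [Multiset.map_cons, Multiset.sum_cons]
        have h1 := hdtri (some q.1) (some s) none
        clear hB hA
        linarith
  · -- extract a pair (s, y) from m
    have hs : s ∈ m.map Prod.fst := Stmt10Aux.extract_mem ha hA
    obtain ⟨p, hp, hp1⟩ := Multiset.mem_map.1 hs
    obtain ⟨m₁, rfl⟩ := Multiset.exists_cons_of_mem hp
    simp only [Multiset.map_cons, hp1] at ha hb hA
    have hm1f : m₁.map Prod.fst ≤ A := by
      have h := Stmt10Aux.extract_erase_le ha
      rwa [Multiset.erase_cons_head] at h
    by_cases hB : p.2 ::ₘ m₁.map Prod.snd ≤ B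
    · refine ⟨m₁, hm1f, le_trans (Multiset.le_cons_self _ _) hB, ?_⟩
      unfold cost
      simp only [Multiset.map_cons, Multiset.sum_cons, hp1]
      rw [Stmt10Aux.cons_sub_cons', Multiset.cons_sub_of_le _ hB,
        Stmt10Aux.sub_of_cons_le hB]
      simp only [Multiset.map_cons, Multiset.sum_cons]
      have h1 := hdtri none (some s) (some p.2)
      clear hA hB
      linarith
    · by_cases hy : p.2 = s
      · rw [hy] at hb hB
        refine ⟨m₁, hm1f, (Multiset.cons_le_cons_iff s).1 hb, ?_⟩
        unfold cost
        simp only [Multiset.map_cons, Multiset.sum_cons, hp1, hy]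
        rw [Stmt10Aux.cons_sub_cons', Stmt10Aux.cons_sub_cons']
        have h0 : d (some s) (some s) = 0 := (hdeq _ _).2 rfl
        rw [h0]
        clear hA hB
        linarith [le_refl (0:ℝ)]
      · -- s occurs also as a snd in m₁
        have hsb : s ∈ m₁.map Prod.snd := by
          have h := Stmt10Aux.extract_mem hb hB
          rcases Multiset.mem_cons.1 h with h' | h'
          · exact absurd h'.symm hy
          · exact h'
        obtain ⟨q, hq, hq2⟩ := Multiset.mem_map.1 hsb
        obtain ⟨m₂, rfl⟩ := Multiset.exists_cons_of_mem hq
        simp only [Multiset.map_cons, hq2] at ha hb hm1f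
        refine ⟨(q.1, p.2) ::ₘ m₂, ?_, ?_, ?_⟩
        · simpa using hm1f
        · have hb' : s ::ₘ p.2 ::ₘ m₂.map Prod.snd ≤ s ::ₘ B := by
            rwa [Multiset.cons_swap] at hb
          simpa using (Multiset.cons_le_cons_iff s).1 hb'
        · unfold cost
          simp only [Multiset.map_cons, Multiset.sum_cons, hp1, hq2]
          rw [Stmt10Aux.cons_sub_cons']
          rw [show (p.2 ::ₘ s ::ₘ Multiset.map Prod.snd m₂ : Multiset Pt)
              = s ::ₘ p.2 ::ₘ Multiset.map Prod.snd m₂ from Multiset.cons_swap _ _ _,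
            Stmt10Aux.cons_sub_cons']
          have h1 := hdtri (some q.1) (some s) (some p.2)
          clear hA hB
          linarith

/-- Adding a common finite diagram to both sides does not change the
1-Wasserstein distance: `W₁^d(α + σ, β + σ) = W₁^d(α, β)`. -/
theorem stmt10 (d : PtD → PtD → ℝ)
    (hd0 : ∀ u v : PtD, 0 ≤ d u v)
    (hdsymm : ∀ u v : PtD, d u v = d v u)
    (hdeq : ∀ u v : PtD, d u v = 0 ↔ u = v)
    (hdtri : ∀ u v w : PtD, d u w ≤ d u v + d v w)
    (α β σ : Multiset Pt) :
    W1fin d (α + σ) (β + σ) = W1fin d α β := by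
  induction σ using Multiset.induction with
  | empty => simp
  | cons s σ ih =>
    rw [Multiset.add_cons, Multiset.add_cons]
    exact le_antisymm
      (le_trans (W1_cons_le d hd0 hdeq s (α + σ) (β + σ)) (le_of_eq ih))
      (le_trans (le_of_eq ih.symm) (W1_le_cons d hd0 hdtri hdeq s (α + σ) (β + σ)))

end
end

section
/- Let d be a metric on (ℝ²_≤ ∖ Δ) ∪ {Δ}, and let α, β be countable persistence diagrams with W₁^d(α,0) < ∞ and W₁^d(β,0) < ∞, where 0 denotes the empty diagram. If β ≤ α as multisets (every point of β occurs in α with at least the same multiplicity), then W₁^d(α, β) = W₁^d(α − β, 0) = W₁^d(α, 0) − W₁^d(β, 0), where α − β denotes the multiset difference. -/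
open scoped Classical ENNReal
open MeasureTheory Filter

noncomputable section

/-- A countable persistence diagram: a countable family of points, where `none`
entries represent no point (equivalently, copies of the diagonal `Δ`, which is
the base point of the quotient). The empty diagram is `fun _ => none`. -/
abbrev Diagram : Type := ℕ → PtD

/-- Pad a countable diagram with countably many copies of the diagonal, so that
partial matchings between two diagrams become bijections of the padded index
sets. -/
def pad (α : Diagram) : ℕ ⊕ ℕ → PtD
  | Sum.inl i => α i
  | Sum.inr _ => none

/-- The 1-Wasserstein distance between countable persistence diagrams with
ground metric `d`: the infimum over all couplings (= bijections of the padded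
diagrams; unmatched points are matched with the diagonal) of the possibly
infinite total cost. -/
def W1c (d : PtD → PtD → ℝ) (α β : Diagram) : ℝ≥0∞ :=
  ⨅ e : (ℕ ⊕ ℕ) ≃ (ℕ ⊕ ℕ), ∑' i : ℕ ⊕ ℕ, ENNReal.ofReal (d (pad α i) (pad β (e i)))

/-- The tent function of a (possibly diagonal) point. -/
def tentD : PtD → ℝ → ℝ
  | Option.some x, t => max 0 (min (t - x.1.1) (x.1.2 - t))
  | Option.none, _ => 0

/-- The persistence landscape `λ_α(k,t)` of a countable diagram: the `k`-th
largest element of the multiset `{tent_x(t) : x ∈ α}` (and `0` if `α` has fewer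
than `k` points). -/
def landC (α : Diagram) (k : ℕ) (t : ℝ) : ℝ :=
  sSup {h : ℝ | 0 < h ∧ ∃ s : Finset ℕ, k ≤ s.card ∧ ∀ i ∈ s, h ≤ tentD (α i) t}

/-- `‖Λα‖₁ = ∑_{k ≥ 1} ∫ λ_α(k,t) dt`, valued in `[0,∞]`. -/
def lambdaNormC (α : Diagram) : ℝ≥0∞ :=
  ∑' k : ℕ, ∫⁻ t : ℝ, ENNReal.ofReal (landC α (k + 1) t)

/-- `‖Λα − Λβ‖₁ = ∑_{k ≥ 1} ∫ |λ_α(k,t) − λ_β(k,t)| dt`, valued in `[0,∞]`. -/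
def lambdaDistC (α β : Diagram) : ℝ≥0∞ :=
  ∑' k : ℕ, ∫⁻ t : ℝ, ENNReal.ofReal |landC α (k + 1) t - landC β (k + 1) t|

/-- The empty diagram. -/
def emptyDiagram : Diagram := fun _ => none

/-- The multiset difference `α − β` of countable diagrams, where `β` is
realized as a sub-multiset of `α` via the injection `ι` on the indices of the
actual points of `β`: the points of `α` hit by `ι` are removed. -/
def diffDiagram (α β : Diagram) (ι : ℕ → ℕ) : Diagram :=
  fun j => if ∃ i, β i ≠ none ∧ ι i = j then none else α j

lemma pad_empty (i : ℕ ⊕ ℕ) : pad emptyDiagram i = none := by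
  cases i <;> rfl

lemma W1c_empty (d : PtD → PtD → ℝ) (γ : Diagram) :
    W1c d γ emptyDiagram = ∑' i : ℕ ⊕ ℕ, ENNReal.ofReal (d (pad γ i) none) := by
  simp only [W1c]
  refine le_antisymm (iInf_le_of_le (Equiv.refl _) (le_of_eq (tsum_congr fun i => by
      rw [pad_empty]))) (le_iInf fun e => le_of_eq (tsum_congr fun i => by
      rw [pad_empty]))

/-- If `β ≤ α` as countable multisets (witnessed by an injection `ι` of the
points of `β` into those of `α`) and both have finite distance to the empty
diagram `0`, then `W₁^d(α, β) = W₁^d(α − β, 0) = W₁^d(α, 0) − W₁^d(β, 0)`. -/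
theorem stmt14 (d : PtD → PtD → ℝ)
    (hd0 : ∀ u v : PtD, 0 ≤ d u v)
    (hdsymm : ∀ u v : PtD, d u v = d v u)
    (hdeq : ∀ u v : PtD, d u v = 0 ↔ u = v)
    (hdtri : ∀ u v w : PtD, d u w ≤ d u v + d v w)
    (α β : Diagram) (ι : ℕ → ℕ)
    (hinj : Set.InjOn ι {i | β i ≠ none})
    (hsub : ∀ i, β i ≠ none → β i = α (ι i))
    (hα : W1c d α emptyDiagram < ⊤) (hβ : W1c d β emptyDiagram < ⊤) :
    W1c d α β = W1c d (diffDiagram α β ι) emptyDiagram ∧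
    W1c d α β = W1c d α emptyDiagram - W1c d β emptyDiagram := by
  classical
  set S : Set ℕ := {i | β i ≠ none} with hS
  set T₁ : Set (ℕ ⊕ ℕ) := (fun i => (Sum.inl (ι i) : ℕ ⊕ ℕ)) '' S with hT₁
  set T₂ : Set (ℕ ⊕ ℕ) := Sum.inl '' S with hT₂
  have hinj1 : Set.InjOn (fun i => (Sum.inl (ι i) : ℕ ⊕ ℕ)) S := fun a ha b hb h =>
    hinj ha hb (Sum.inl.inj h)
  let eq1 : S ≃ T₁ := Equiv.Set.imageOfInjOn _ S hinj1
  let eq2 : S ≃ T₂ := Equiv.Set.imageOfInjOn _ S Sum.inl_injective.injOn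
  have hinf1 : (T₁ᶜ : Set (ℕ ⊕ ℕ)).Infinite :=
    Set.infinite_of_injective_forall_mem (f := (Sum.inr : ℕ → ℕ ⊕ ℕ)) Sum.inr_injective
      (fun a => by simp [hT₁])
  have hinf2 : (T₂ᶜ : Set (ℕ ⊕ ℕ)).Infinite :=
    Set.infinite_of_injective_forall_mem (f := (Sum.inr : ℕ → ℕ ⊕ ℕ)) Sum.inr_injective
      (fun a => by simp [hT₂])
  have : Infinite ↥(T₁ᶜ) := hinf1.to_subtype
  have : Infinite ↥(T₂ᶜ) := hinf2.to_subtype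
  obtain ⟨h⟩ := (inferInstance : Nonempty (↥(T₁ᶜ) ≃ ↥(T₂ᶜ)))
  set e : (ℕ ⊕ ℕ) ≃ (ℕ ⊕ ℕ) :=
    (Equiv.Set.sumCompl T₁).symm.trans
      (((eq1.symm.trans eq2).sumCongr h).trans (Equiv.Set.sumCompl T₂)) with he
  -- e sends the image of ι to the corresponding index of β
  have P2 : ∀ i₀ (hi₀ : i₀ ∈ S), e (Sum.inl (ι i₀)) = Sum.inl i₀ := by
    intro i₀ hi₀
    have hm : (Sum.inl (ι i₀) : ℕ ⊕ ℕ) ∈ T₁ := ⟨i₀, hi₀, rfl⟩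
    have h1 : eq1.symm ⟨Sum.inl (ι i₀), hm⟩ = ⟨i₀, hi₀⟩ := by
      rw [Equiv.symm_apply_eq]; exact Subtype.ext rfl
    simp only [he, Equiv.trans_apply, Equiv.Set.sumCompl_symm_apply_of_mem hm,
      Equiv.sumCongr_apply, Sum.map_inl, Equiv.Set.sumCompl_apply_inl, h1]
    rfl
  -- e maps the complement of the image of ι into indices where β is none
  have P1 : ∀ i, i ∉ T₁ → e i ∈ T₂ᶜ := by
    intro i hi
    simp only [he, Equiv.trans_apply, Equiv.Set.sumCompl_symm_apply_of_notMem hi,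
      Equiv.sumCongr_apply, Sum.map_inr, Equiv.Set.sumCompl_apply_inr]
    exact (h ⟨i, hi⟩).2
  have padβ_none : ∀ j, j ∈ T₂ᶜ → pad β j = none := by
    intro j hj
    cases j with
    | inl m =>
      have : m ∉ S := fun hm => hj ⟨m, hm, rfl⟩
      simpa [hS, pad] using this
    | inr k => rfl
  set C : ℝ≥0∞ := ∑' i : ↥(T₁ᶜ), ENNReal.ofReal (d (pad α ↑i) none) with hC
  -- the cost of the coupling e
  have key : ∀ i, ENNReal.ofReal (d (pad α i) (pad β (e i))) =
      (T₁ᶜ : Set (ℕ ⊕ ℕ)).indicator (fun i => ENNReal.ofReal (d (pad α i) none)) i := by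
    intro i
    by_cases hi : i ∈ T₁
    · obtain ⟨i₀, hi₀, rfl⟩ := hi
      rw [P2 i₀ hi₀]
      have hb : pad β (Sum.inl i₀) = pad α (Sum.inl (ι i₀)) := hsub i₀ hi₀
      have hnot : ((fun i => (Sum.inl (ι i) : ℕ ⊕ ℕ)) i₀) ∉ (T₁ᶜ : Set (ℕ ⊕ ℕ)) :=
        fun hc => hc ⟨i₀, hi₀, rfl⟩
      rw [hb, (hdeq _ _).mpr rfl, Set.indicator_of_notMem hnot]
      simp
    · rw [padβ_none _ (P1 i hi), Set.indicator_of_mem (Set.mem_compl hi)]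
  have hind : (∑' i : ↥(T₁ᶜ), ENNReal.ofReal (d (pad α ↑i) none)) =
      ∑' i, (T₁ᶜ : Set (ℕ ⊕ ℕ)).indicator (fun i => ENNReal.ofReal (d (pad α i) none)) i :=
    tsum_subtype (T₁ᶜ) (fun i => ENNReal.ofReal (d (pad α i) none))
  have coste : (∑' i : ℕ ⊕ ℕ, ENNReal.ofReal (d (pad α i) (pad β (e i)))) = C := by
    rw [tsum_congr key, hC, hind]
  -- upper bound
  have hub : W1c d α β ≤ C := iInf_le_of_le e (le_of_eq coste)
  -- W₁(α − β, 0) = C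
  have hdiff : W1c d (diffDiagram α β ι) emptyDiagram = C := by
    rw [W1c_empty, hC, hind]
    refine tsum_congr fun i => ?_
    by_cases hi : i ∈ T₁
    · obtain ⟨i₀, hi₀, rfl⟩ := hi
      have : diffDiagram α β ι (ι i₀) = none := by
        have hex : ∃ i, β i ≠ none ∧ ι i = ι i₀ := ⟨i₀, hi₀, rfl⟩
        simp only [diffDiagram, if_pos hex]
      have hnot : ((fun i => (Sum.inl (ι i) : ℕ ⊕ ℕ)) i₀) ∉ (T₁ᶜ : Set (ℕ ⊕ ℕ)) :=
        fun hc => hc ⟨i₀, hi₀, rfl⟩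
      rw [Set.indicator_of_notMem hnot]
      show ENNReal.ofReal (d (diffDiagram α β ι (ι i₀)) none) = 0
      rw [this, (hdeq _ _).mpr rfl]; simp
    · rw [Set.indicator_of_mem (Set.mem_compl hi)]
      cases i with
      | inl j =>
        have hj : ¬ ∃ i₀, β i₀ ≠ none ∧ ι i₀ = j := by
          rintro ⟨i₀, hi₀, rfl⟩; exact hi ⟨i₀, hi₀, rfl⟩
        show ENNReal.ofReal (d (diffDiagram α β ι j) none) = _
        rw [diffDiagram, if_neg hj]; rfl
      | inr k => rfl
  -- ∑ over S of distances of β points to the diagonal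
  have hβS : W1c d β emptyDiagram = ∑' i₀ : S, ENNReal.ofReal (d (β ↑i₀) none) := by
    rw [W1c_empty,
      ← Summable.tsum_add_tsum_compl (s := T₂) ENNReal.summable ENNReal.summable]
    have h2 : (∑' j : ↥(T₂ᶜ), ENNReal.ofReal (d (pad β ↑j) none)) = 0 := by
      refine Summable.tsum_eq_zero_iff ENNReal.summable |>.mpr fun j => ?_
      rw [padβ_none _ j.2, (hdeq _ _).mpr rfl]; simp
    rw [h2, add_zero, ← Equiv.tsum_eq eq2 (fun j : T₂ => ENNReal.ofReal (d (pad β ↑j) none))]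
    rfl
  have hαS : W1c d α emptyDiagram = (∑' i₀ : S, ENNReal.ofReal (d (β ↑i₀) none)) + C := by
    rw [W1c_empty,
      ← Summable.tsum_add_tsum_compl (s := T₁) ENNReal.summable ENNReal.summable, hC]
    congr 1
    rw [← Equiv.tsum_eq eq1 (fun j : T₁ => ENNReal.ofReal (d (pad α ↑j) none))]
    refine tsum_congr fun i₀ => ?_
    show ENNReal.ofReal (d (α (ι ↑i₀)) none) = ENNReal.ofReal (d (β ↑i₀) none)
    rw [hsub ↑i₀ i₀.2]
  have hsum : W1c d α emptyDiagram = W1c d β emptyDiagram + C := by rw [hαS, hβS]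
  have hCD : C = W1c d α emptyDiagram - W1c d β emptyDiagram := by
    rw [hsum, ENNReal.add_sub_cancel_left hβ.ne]
  -- lower bound
  have hlow : W1c d α emptyDiagram - W1c d β emptyDiagram ≤ W1c d α β := by
    rw [W1c_empty, W1c_empty]
    refine le_iInf fun e' => ?_
    rw [tsub_le_iff_right]
    calc (∑' i : ℕ ⊕ ℕ, ENNReal.ofReal (d (pad α i) none))
        ≤ ∑' i : ℕ ⊕ ℕ, (ENNReal.ofReal (d (pad α i) (pad β (e' i))) +
            ENNReal.ofReal (d (pad β (e' i)) none)) :=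
          ENNReal.tsum_le_tsum fun i =>
            le_trans (ENNReal.ofReal_le_ofReal (hdtri _ _ _)) ENNReal.ofReal_add_le
      _ = (∑' i : ℕ ⊕ ℕ, ENNReal.ofReal (d (pad α i) (pad β (e' i)))) +
            ∑' i : ℕ ⊕ ℕ, ENNReal.ofReal (d (pad β (e' i)) none) := ENNReal.tsum_add
      _ = (∑' i : ℕ ⊕ ℕ, ENNReal.ofReal (d (pad α i) (pad β (e' i)))) +
            ∑' j : ℕ ⊕ ℕ, ENNReal.ofReal (d (pad β j) none) := by
          rw [Equiv.tsum_eq e' (fun j => ENNReal.ofReal (d (pad β j) none))]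
  have hmain : W1c d α β = C := le_antisymm hub (hCD ▸ hlow)
  exact ⟨hmain.trans hdiff.symm, hmain.trans hCD⟩

end
end

section
/- Let α and β be countable persistence diagrams that are 1-finite with respect to d_rk (i.e. W₁^rk(α,0) < ∞ and W₁^rk(β,0) < ∞, where 0 is the empty diagram). Then ‖Λα − Λβ‖₁ ≤ ½ W₁^rk(α, β). -/
open scoped Classical ENNReal
open MeasureTheory Filter

noncomputable section

namespace Stmt16Aux

/-- generic triangle function -/
def g (c t : ℝ) : ℝ := max 0 (c - |t|)

lemma g_nonneg (c t : ℝ) : 0 ≤ g c t := le_max_left _ _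

lemma g_continuous (c : ℝ) : Continuous (g c) := by
  unfold g; fun_prop

lemma g_eq_zero {c t : ℝ} (h : c ≤ |t|) : g c t = 0 :=
  max_eq_left (by linarith)

lemma g_integrable (c : ℝ) : MeasureTheory.Integrable (g c) := by
  refine (g_continuous c).integrable_of_hasCompactSupport ?_
  refine HasCompactSupport.intro (isCompact_Icc (a := -(max c 0)) (b := max c 0)) ?_
  intro t ht
  simp only [Set.mem_Icc, not_and_or, not_le] at ht
  refine g_eq_zero ?_
  rcases ht with h | h
  · have : max c 0 < -t := by linarith
    calc c ≤ max c 0 := le_max_left _ _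
    _ ≤ -t := this.le
    _ ≤ |t| := neg_le_abs t
  · calc c ≤ max c 0 := le_max_left _ _
    _ ≤ t := h.le
    _ ≤ |t| := le_abs_self t

lemma g_integral (c : ℝ) : ∫ t, g c t = (max c 0) ^ 2 := by
  rcases le_or_gt c 0 with hc | hc
  · have : g c = fun _ => 0 := by
      funext t; exact g_eq_zero (le_trans hc (abs_nonneg t))
    rw [this]
    simp [max_eq_right hc]
  · have hind : g c = Set.indicator (Set.Ioc (-c) c) (g c) := by
      funext t
      rcases Classical.em (t ∈ Set.Ioc (-c) c) with h | h
      · rw [Set.indicator_of_mem h]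
      · rw [Set.indicator_of_notMem h]
        simp only [Set.mem_Ioc, not_and_or, not_lt, not_le] at h
        refine g_eq_zero ?_
        rcases h with h | h
        · calc c ≤ -t := by linarith
          _ ≤ |t| := neg_le_abs t
        · exact le_trans h.le (le_abs_self t)
    have hle : (-c) ≤ c := by linarith
    rw [hind, MeasureTheory.integral_indicator measurableSet_Ioc,
      ← intervalIntegral.integral_of_le hle,
      ← intervalIntegral.integral_add_adjacent_intervals (a := -c) (b := 0) (c := c)
        (((g_continuous c).intervalIntegrable _ _))
        (((g_continuous c).intervalIntegrable _ _))]
    have h1 : ∫ t in (-c)..0, g c t = ∫ t in (-c)..0, (c + t) := by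
      refine intervalIntegral.integral_congr ?_
      intro t ht
      rw [Set.uIcc_of_le (by linarith), Set.mem_Icc] at ht
      unfold g
      rw [abs_of_nonpos ht.2, max_eq_right (by linarith)]
      ring
    have h2 : ∫ t in (0:ℝ)..c, g c t = ∫ t in (0:ℝ)..c, (c - t) := by
      refine intervalIntegral.integral_congr ?_
      intro t ht
      rw [Set.uIcc_of_le (by linarith), Set.mem_Icc] at ht
      unfold g
      rw [abs_of_nonneg ht.1, max_eq_right (by linarith)]
    rw [h1, h2]
    have i1 : ∫ t in (-c)..0, (c + t) = c ^ 2 / 2 := by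
      rw [intervalIntegral.integral_add (continuous_const.intervalIntegrable _ _)
        (by exact continuous_id.intervalIntegrable _ _ :
          IntervalIntegrable (fun x : ℝ => x) MeasureTheory.volume (-c) 0)]
      simp [integral_id]
      ring
    have i2 : ∫ t in (0:ℝ)..c, (c - t) = c ^ 2 / 2 := by
      rw [intervalIntegral.integral_sub (continuous_const.intervalIntegrable _ _)
        (by exact continuous_id.intervalIntegrable _ _ :
          IntervalIntegrable (fun x : ℝ => x) MeasureTheory.volume 0 c)]
      simp [integral_id]
      ring
    rw [i1, i2, max_eq_left hc.le]
    ring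

end Stmt16Aux
namespace Stmt16Aux

/-- generic tent -/
def tent (a b t : ℝ) : ℝ := max 0 (min (t - a) (b - t))

lemma tent_eq_g (a b t : ℝ) : tent a b t = g ((b - a) / 2) (t - (a + b) / 2) := by
  unfold tent g
  congr 1
  rcases le_total (t - a) (b - t) with h | h
  · rw [min_eq_left h, abs_of_nonpos (by linarith)]; ring
  · rw [min_eq_right h, abs_of_nonneg (by linarith)]; ring

lemma tent_nonneg (a b t : ℝ) : 0 ≤ tent a b t := le_max_left _ _

lemma tent_continuous (a b : ℝ) : Continuous (tent a b) := by
  unfold tent; fun_prop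

lemma tent_integrable (a b : ℝ) : MeasureTheory.Integrable (tent a b) := by
  have : tent a b = fun t => g ((b - a) / 2) (t - (a + b) / 2) := funext (tent_eq_g a b)
  rw [this]
  exact (g_integrable _).comp_sub_right _

lemma tent_integral (a b : ℝ) : ∫ t, tent a b t = (max (b - a) 0) ^ 2 / 4 := by
  have : tent a b = fun t => g ((b - a) / 2) (t - (a + b) / 2) := funext (tent_eq_g a b)
  rw [this, MeasureTheory.integral_sub_right_eq_self (g ((b - a) / 2)) ((a + b) / 2),
    g_integral]
  rcases le_total (b - a) 0 with h | h
  · rw [max_eq_right h, max_eq_right (by linarith)]; norm_num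
  · rw [max_eq_left h, max_eq_left (by linarith)]; ring

lemma tent_min (a b a' b' t : ℝ) :
    min (tent a b t) (tent a' b' t) = tent (max a a') (min b b') t := by
  unfold tent
  rw [← max_min_distrib_left]
  congr 1
  rw [min_min_min_comm, min_sub_sub_left, min_sub_sub_right]

lemma tent_le (a b t : ℝ) (h : a ≤ b) : tent a b t ≤ (b - a) / 2 := by
  refine max_le (by linarith) ?_
  rcases le_total (t - a) (b - t) with h' | h'
  · rw [min_eq_left h']; linarith
  · rw [min_eq_right h']; linarith

lemma abs_sub_eq (x y : ℝ) : |x - y| = x + y - 2 * min x y := by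
  rcases le_total x y with h | h
  · rw [abs_of_nonpos (by linarith), min_eq_left h]; ring
  · rw [abs_of_nonneg (by linarith), min_eq_right h]; ring

lemma tentD_eq (p : Pt) : tentD (some p) = tent p.1.1 p.1.2 := by
  funext t; rfl

lemma tentD_nonneg (x : PtD) (t : ℝ) : 0 ≤ tentD x t := by
  cases x with
  | none => exact le_refl 0
  | some p => exact tent_nonneg _ _ _

lemma tentD_continuous (x : PtD) : Continuous (tentD x) := by
  cases x with
  | none => exact continuous_const
  | some p => rw [tentD_eq]; exact tent_continuous _ _

lemma pair_one (p : Pt) :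
    (∫⁻ t : ℝ, ENNReal.ofReal |tentD (some p) t - tentD none t|) * 2
      ≤ ENNReal.ofReal (drkQ (some p) none) := by
  have h1 : (∫⁻ t : ℝ, ENNReal.ofReal |tentD (some p) t - tentD none t|)
      = ∫⁻ t : ℝ, ENNReal.ofReal (tent p.1.1 p.1.2 t) := by
    apply MeasureTheory.lintegral_congr
    intro t
    show ENNReal.ofReal |tentD (some p) t - 0| = _
    rw [sub_zero, abs_of_nonneg (tentD_nonneg _ t), tentD_eq]
  rw [h1, ← MeasureTheory.ofReal_integral_eq_lintegral_ofReal (tent_integrable _ _)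
    (Filter.Eventually.of_forall fun t => tent_nonneg _ _ _), tent_integral,
    ← ENNReal.ofReal_ofNat 2, ← ENNReal.ofReal_mul' (by norm_num)]
  apply ENNReal.ofReal_le_ofReal
  show _ ≤ (p.1.2 - p.1.1) ^ 2 / 2
  rw [max_eq_left (by linarith [p.2] : (0:ℝ) ≤ p.1.2 - p.1.1)]
  ring_nf
  exact le_refl _

/-- the key per-pair integral bound -/
lemma pair_integral (x y : PtD) :
    (∫⁻ t : ℝ, ENNReal.ofReal |tentD x t - tentD y t|) * 2 ≤ ENNReal.ofReal (drkQ x y) := by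
  have key : ∀ p q : Pt,
      (∫⁻ t : ℝ, ENNReal.ofReal |tentD (some p) t - tentD (some q) t|) * 2
        ≤ ENNReal.ofReal (drkQ (some p) (some q)) := by
    intro p q
    obtain ⟨⟨a, b⟩, hab⟩ := p
    obtain ⟨⟨a', b'⟩, hab'⟩ := q
    simp only [tentD_eq]
    have hint : MeasureTheory.Integrable (fun t => |tent a b t - tent a' b' t|) :=
      ((tent_integrable a b).sub (tent_integrable a' b')).abs
    rw [← MeasureTheory.ofReal_integral_eq_lintegral_ofReal hint
      (Filter.Eventually.of_forall fun t => abs_nonneg _)]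
    have habs : (fun t => |tent a b t - tent a' b' t|)
        = fun t => tent a b t + tent a' b' t - 2 * tent (max a a') (min b b') t := by
      funext t
      rw [abs_sub_eq, tent_min]
    rw [habs, MeasureTheory.integral_sub
      (by exact (tent_integrable a b).add (tent_integrable a' b') :
        MeasureTheory.Integrable (fun t => tent a b t + tent a' b' t) _)
      (by exact (tent_integrable _ _).const_mul 2 :
        MeasureTheory.Integrable (fun t => 2 * tent (max a a') (min b b') t) _),
      MeasureTheory.integral_add (tent_integrable a b) (tent_integrable a' b'),
      MeasureTheory.integral_const_mul, tent_integral, tent_integral, tent_integral]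
    rw [← ENNReal.ofReal_ofNat 2, ← ENNReal.ofReal_mul' (by norm_num)]
    apply ENNReal.ofReal_le_ofReal
    simp only [drkQ, drk]
    rw [max_eq_left (by linarith : (0:ℝ) ≤ b - a), max_eq_left (by linarith : (0:ℝ) ≤ b' - a')]
    have : max (min b b' - max a a') 0 = max 0 (min b b' - max a a') := max_comm _ _
    rw [this]
    ring_nf
    exact le_refl _
  match x, y with
  | Option.none, Option.none => simp [tentD, drkQ]
  | Option.some p, Option.none => exact pair_one p
  | Option.none, Option.some q =>
      have h1 : (∫⁻ t : ℝ, ENNReal.ofReal |tentD none t - tentD (some q) t|)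
          = ∫⁻ t : ℝ, ENNReal.ofReal |tentD (some q) t - tentD none t| := by
        apply MeasureTheory.lintegral_congr; intro t; rw [abs_sub_comm]
      rw [h1]
      exact pair_one q
  | Option.some p, Option.some q => exact key p q

end Stmt16Aux
namespace Stmt16Aux

/-- layer indicator -/
def chi (a b h : ℝ) : ℝ≥0∞ := if ((h < a) ≠ (h < b)) then 1 else 0

lemma chi_eq_indicator (a b : ℝ) :
    chi a b = Set.indicator (Set.Ico (min a b) (max a b)) (fun _ => (1:ℝ≥0∞)) := by
  funext h
  have hiff : ((h < a) ≠ (h < b)) ↔ h ∈ Set.Ico (min a b) (max a b) := by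
    simp only [Set.mem_Ico, min_le_iff, lt_max_iff, ne_eq, eq_iff_iff]
    constructor
    · intro H
      by_cases h1 : h < a <;> by_cases h2 : h < b
      · exact absurd (iff_of_true h1 h2) H
      · exact ⟨Or.inr (not_lt.mp h2), Or.inl h1⟩
      · exact ⟨Or.inl (not_lt.mp h1), Or.inr h2⟩
      · exact absurd (iff_of_false h1 h2) H
    · rintro ⟨H1, H2⟩ Hiff
      rcases H1 with h1 | h1
      · rcases H2 with h2 | h2
        · exact absurd h2 (not_lt.mpr h1)
        · exact absurd (Hiff.mpr h2) (not_lt.mpr h1)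
      · rcases H2 with h2 | h2
        · exact absurd (Hiff.mp h2) (not_lt.mpr h1)
        · exact absurd h2 (not_lt.mpr h1)
  unfold chi
  by_cases H : (h < a) ≠ (h < b)
  · rw [if_pos H, Set.indicator_of_mem (hiff.mp H)]
  · rw [if_neg H, Set.indicator_of_notMem (fun hm => H (hiff.mpr hm))]

lemma chi_measurable (a b : ℝ) : Measurable (chi a b) := by
  rw [chi_eq_indicator]
  exact measurable_const.indicator measurableSet_Ico

lemma chi_lintegral (a b : ℝ) (ha : 0 ≤ a) (hb : 0 ≤ b) :
    ∫⁻ h in Set.Ioi (0:ℝ), chi a b h = ENNReal.ofReal |a - b| := by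
  rw [chi_eq_indicator]
  have h1 : ∫⁻ h in Set.Ioi (0:ℝ),
      Set.indicator (Set.Ico (min a b) (max a b)) (fun _ => (1:ℝ≥0∞)) h
      = MeasureTheory.volume.restrict (Set.Ioi (0:ℝ)) (Set.Ico (min a b) (max a b)) := by
    have := MeasureTheory.lintegral_indicator_one (μ := MeasureTheory.volume.restrict (Set.Ioi (0:ℝ)))
      (measurableSet_Ico (a := min a b) (b := max a b))
    rw [← this]
    rfl
  rw [h1, MeasureTheory.Measure.restrict_apply measurableSet_Ico]
  have h2 : MeasureTheory.volume (Set.Ico (min a b) (max a b) ∩ Set.Ioi 0)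
      = ENNReal.ofReal (max a b - min a b) := by
    apply le_antisymm
    · calc MeasureTheory.volume (Set.Ico (min a b) (max a b) ∩ Set.Ioi 0)
          ≤ MeasureTheory.volume (Set.Ico (min a b) (max a b)) :=
            MeasureTheory.measure_mono Set.inter_subset_left
        _ = ENNReal.ofReal (max a b - min a b) := Real.volume_Ico
    · calc ENNReal.ofReal (max a b - min a b)
          = MeasureTheory.volume (Set.Ioo (min a b) (max a b)) := Real.volume_Ioo.symm
        _ ≤ MeasureTheory.volume (Set.Ico (min a b) (max a b) ∩ Set.Ioi 0) := by
            apply MeasureTheory.measure_mono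
            intro x hx
            exact ⟨⟨hx.1.le, hx.2⟩, lt_of_le_of_lt (le_min ha hb) hx.1⟩
  rw [h2, max_sub_min_eq_abs, abs_sub_comm]

end Stmt16Aux
namespace Stmt16Aux

lemma tsum_if_finset {ι : Type*} (s : Finset ι) (P : ι → Prop) [DecidablePred P]
    (hP : ∀ i, P i ↔ i ∈ s) :
    ∑' i : ι, (if P i then (1:ℝ≥0∞) else 0) = s.card := by
  rw [tsum_eq_sum (s := s) (fun i hi => if_neg (fun hPi => hi ((hP i).mp hPi)))]
  rw [Finset.sum_congr rfl (fun i hi => if_pos ((hP i).mpr hi))]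
  simp

lemma count_le {ι : Type*} (A B : Set ι) (hA : A.Finite) (hB : B.Finite) :
    ∑' k : ℕ, (if ((k + 1 ≤ A.ncard) ≠ (k + 1 ≤ B.ncard)) then (1:ℝ≥0∞) else 0)
      ≤ ∑' i : ι, (if ((i ∈ A) ≠ (i ∈ B)) then (1:ℝ≥0∞) else 0) := by
  classical
  set na := A.ncard with hna
  set nb := B.ncard with hnb
  have hL : ∑' k : ℕ, (if ((k + 1 ≤ na) ≠ (k + 1 ≤ nb)) then (1:ℝ≥0∞) else 0)
      = ((max na nb - min na nb : ℕ) : ℝ≥0∞) := by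
    rw [tsum_if_finset (Finset.Ico (min na nb) (max na nb))
      (fun k => (k + 1 ≤ na) ≠ (k + 1 ≤ nb)) ?_]
    · rw [Nat.card_Ico]
    · intro k
      simp only [Finset.mem_Ico, min_le_iff, lt_max_iff, ne_eq, eq_iff_iff]
      constructor
      · intro H
        by_cases h1 : k + 1 ≤ na <;> by_cases h2 : k + 1 ≤ nb
        · exact absurd (iff_of_true h1 h2) H
        · exact ⟨Or.inr (by omega), Or.inl (by omega)⟩
        · exact ⟨Or.inl (by omega), Or.inr (by omega)⟩
        · exact absurd (iff_of_false h1 h2) H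
      · rintro ⟨H1, H2⟩ Hiff
        rcases H1 with h1 | h1 <;> rcases H2 with h2 | h2
        · omega
        · have := Hiff.mpr (by omega); omega
        · have := Hiff.mp (by omega); omega
        · omega
  rw [hL]
  -- RHS is at least the cardinality of the symmetric difference
  set D : Finset ι := (hA.toFinset \ hB.toFinset) ∪ (hB.toFinset \ hA.toFinset) with hD
  have hcard : (max na nb - min na nb : ℕ) ≤ D.card := by
    have hAB : hA.toFinset.card ≤ hB.toFinset.card + (hA.toFinset \ hB.toFinset).card := by
      calc hA.toFinset.card ≤ (hB.toFinset ∪ (hA.toFinset \ hB.toFinset)).card :=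
            Finset.card_le_card (fun i hi => by
              by_cases h : i ∈ hB.toFinset
              · exact Finset.mem_union_left _ h
              · exact Finset.mem_union_right _ (Finset.mem_sdiff.mpr ⟨hi, h⟩))
        _ ≤ _ := Finset.card_union_le _ _
    have hBA : hB.toFinset.card ≤ hA.toFinset.card + (hB.toFinset \ hA.toFinset).card := by
      calc hB.toFinset.card ≤ (hA.toFinset ∪ (hB.toFinset \ hA.toFinset)).card :=
            Finset.card_le_card (fun i hi => by
              by_cases h : i ∈ hA.toFinset
              · exact Finset.mem_union_left _ h
              · exact Finset.mem_union_right _ (Finset.mem_sdiff.mpr ⟨hi, h⟩))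
        _ ≤ _ := Finset.card_union_le _ _
    have hDcard : D.card = (hA.toFinset \ hB.toFinset).card + (hB.toFinset \ hA.toFinset).card :=
      Finset.card_union_of_disjoint (by
        refine Finset.disjoint_left.mpr ?_
        intro i hi1 hi2
        rw [Finset.mem_sdiff] at hi1 hi2
        exact hi2.2 hi1.1)
    have h1 : na = hA.toFinset.card := Set.ncard_eq_toFinset_card A hA
    have h2 : nb = hB.toFinset.card := Set.ncard_eq_toFinset_card B hB
    omega
  calc ((max na nb - min na nb : ℕ) : ℝ≥0∞) ≤ (D.card : ℝ≥0∞) := by exact_mod_cast hcard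
    _ = ∑ i ∈ D, (1:ℝ≥0∞) := by simp
    _ = ∑ i ∈ D, (if ((i ∈ A) ≠ (i ∈ B)) then (1:ℝ≥0∞) else 0) := by
        refine Finset.sum_congr rfl (fun i hi => ?_)
        rw [hD, Finset.mem_union, Finset.mem_sdiff, Finset.mem_sdiff] at hi
        simp only [Set.Finite.mem_toFinset] at hi
        rcases hi with ⟨hiA, hiB⟩ | ⟨hiB, hiA⟩
        · rw [if_pos (fun (Hiff : (i ∈ A) = (i ∈ B)) => hiB (Hiff ▸ hiA))]
        · rw [if_pos (fun (Hiff : (i ∈ A) = (i ∈ B)) => hiA (Hiff.symm ▸ hiB))]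
    _ ≤ ∑' i : ι, (if ((i ∈ A) ≠ (i ∈ B)) then (1:ℝ≥0∞) else 0) :=
        Summable.sum_le_tsum D (fun i _ => zero_le) ENNReal.summable

end Stmt16Aux
namespace Stmt16Aux

lemma landC_nonneg (α : Diagram) (k : ℕ) (t : ℝ) : 0 ≤ landC α k t :=
  Real.sSup_nonneg (fun _ hx => hx.1.le)

/-- characterization of strict inequality for the landscape, assuming a
uniform bound on the tent values. -/
lemma landC_lt_iff' (α : Diagram) (t : ℝ) (C : ℝ)
    (hC : ∀ i : ℕ, tentD (α i) t ≤ C) (k : ℕ) (h : ℝ) (hh : 0 < h) :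
    h < landC α (k + 1) t ↔
      ∃ s : Finset ℕ, k + 1 ≤ s.card ∧ ∀ i ∈ s, h < tentD (α i) t := by
  set S := {h' : ℝ | 0 < h' ∧ ∃ s : Finset ℕ, k + 1 ≤ s.card ∧ ∀ i ∈ s, h' ≤ tentD (α i) t}
    with hS
  have hbdd : BddAbove S := by
    refine ⟨C, fun h' hh' => ?_⟩
    obtain ⟨_, s, hcard, hs⟩ := hh'
    obtain ⟨i, hi⟩ := Finset.card_pos.mp (lt_of_lt_of_le (Nat.succ_pos k) hcard)
    exact le_trans (hs i hi) (hC i)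
  constructor
  · intro H
    have hne : S.Nonempty := by
      by_contra hemp
      rw [Set.not_nonempty_iff_eq_empty] at hemp
      rw [landC, ← hS, hemp, Real.sSup_empty] at H
      linarith
    obtain ⟨h', hh', hlt⟩ := exists_lt_of_lt_csSup hne H
    obtain ⟨hpos, s, hcard, hs⟩ := hh'
    exact ⟨s, hcard, fun i hi => lt_of_lt_of_le hlt (hs i hi)⟩
  · rintro ⟨s, hcard, hs⟩
    have hne : s.Nonempty := Finset.card_pos.mp (lt_of_lt_of_le (Nat.succ_pos k) hcard)
    set h₀ := s.inf' hne (fun i => tentD (α i) t) with hh₀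
    have hlt : h < h₀ := by
      rw [hh₀, Finset.lt_inf'_iff]
      exact hs
    have hmem : h₀ ∈ S := by
      refine ⟨lt_trans hh hlt, s, hcard, fun i hi => Finset.inf'_le _ hi⟩
    exact lt_of_lt_of_le hlt (le_csSup hbdd hmem)

/-- characterization via counting over the padded index set. -/
lemma landC_lt_iff (α : Diagram) (t : ℝ) (C : ℝ)
    (hC : ∀ j : ℕ ⊕ ℕ, tentD (pad α j) t ≤ C) (k : ℕ) (h : ℝ) (hh : 0 < h)
    (hfin : {j : ℕ ⊕ ℕ | h < tentD (pad α j) t}.Finite) :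
    h < landC α (k + 1) t ↔ k + 1 ≤ {j : ℕ ⊕ ℕ | h < tentD (pad α j) t}.ncard := by
  classical
  rw [landC_lt_iff' α t C (fun i => hC (Sum.inl i)) k h hh]
  set A := {j : ℕ ⊕ ℕ | h < tentD (pad α j) t} with hA
  constructor
  · rintro ⟨s, hcard, hs⟩
    have hsub : ((s.map ⟨Sum.inl, Sum.inl_injective⟩ : Finset (ℕ ⊕ ℕ)) : Set (ℕ ⊕ ℕ)) ⊆ A := by
      intro j hj
      simp only [Finset.coe_map, Set.mem_image, Finset.mem_coe] at hj
      obtain ⟨i, hi, rfl⟩ := hj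
      exact hs i hi
    calc k + 1 ≤ s.card := hcard
      _ = (s.map ⟨Sum.inl, Sum.inl_injective⟩).card := (Finset.card_map _).symm
      _ ≤ A.ncard := by
          rw [← Set.ncard_coe_finset]
          exact Set.ncard_le_ncard hsub hfin
  · intro hk
    set F := hfin.toFinset with hF
    have hFcard : F.card = A.ncard := (Set.ncard_eq_toFinset_card A hfin).symm
    have hmem : ∀ j ∈ F, ∃ i : ℕ, j = Sum.inl i ∧ h < tentD (α i) t := by
      intro j hj
      rw [hF, Set.Finite.mem_toFinset] at hj
      cases j with
      | inl i => exact ⟨i, rfl, hj⟩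
      | inr n =>
          exfalso
          have : tentD (pad α (Sum.inr n)) t = 0 := rfl
          rw [hA, Set.mem_setOf_eq, this] at hj
          linarith
    set f : ℕ ⊕ ℕ → ℕ := Sum.elim id (fun _ => 0) with hf
    refine ⟨F.image f, ?_, ?_⟩
    · rw [Finset.card_image_of_injOn, hFcard]
      · exact hk
      · intro j1 hj1 j2 hj2 heq
        obtain ⟨i1, rfl, _⟩ := hmem j1 hj1
        obtain ⟨i2, rfl, _⟩ := hmem j2 hj2
        simpa [hf] using heq
    · intro i hi
      rw [Finset.mem_image] at hi
      obtain ⟨j, hj, hji⟩ := hi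
      obtain ⟨i', rfl, hlt⟩ := hmem j hj
      have : i = i' := by simpa [hf] using hji.symm
      rw [this]
      exact hlt

end Stmt16Aux
namespace Stmt16Aux

lemma pad_empty (j : ℕ ⊕ ℕ) : pad emptyDiagram j = none := by
  cases j <;> rfl

lemma W1c_empty (α : Diagram) :
    W1c drkQ α emptyDiagram = ∑' j : ℕ ⊕ ℕ, ENNReal.ofReal (drkQ (pad α j) none) := by
  unfold W1c
  have : ∀ e : (ℕ ⊕ ℕ) ≃ (ℕ ⊕ ℕ),
      ∑' i : ℕ ⊕ ℕ, ENNReal.ofReal (drkQ (pad α i) (pad emptyDiagram (e i)))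
        = ∑' j : ℕ ⊕ ℕ, ENNReal.ofReal (drkQ (pad α j) none) := by
    intro e
    exact tsum_congr (fun i => by rw [pad_empty])
  rw [iInf_congr this, iInf_const]

/-- From 1-finiteness, a uniform bound on tents and finiteness of superlevel
counting sets. -/
lemma diagram_bounds (α : Diagram) (hα : W1c drkQ α emptyDiagram < ⊤) :
    ∃ C : ℝ, (∀ j : ℕ ⊕ ℕ, ∀ t : ℝ, tentD (pad α j) t ≤ C) ∧
      (∀ t h : ℝ, 0 < h → {j : ℕ ⊕ ℕ | h < tentD (pad α j) t}.Finite) := by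
  rw [W1c_empty] at hα
  set T := ∑' j : ℕ ⊕ ℕ, ENNReal.ofReal (drkQ (pad α j) none) with hT
  have hTne : T ≠ ⊤ := hα.ne
  -- uniform persistence bound
  have hpers : ∀ j : ℕ ⊕ ℕ, ∀ p : Pt, pad α j = some p →
      (p.1.2 - p.1.1) ≤ Real.sqrt (2 * T.toReal) := by
    intro j p hp
    have h1 : ENNReal.ofReal (drkQ (pad α j) none) ≤ T := ENNReal.le_tsum j
    rw [hp] at h1
    have h2 : (p.1.2 - p.1.1) ^ 2 / 2 ≤ T.toReal := by
      have := (ENNReal.ofReal_le_iff_le_toReal hTne).mp h1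
      exact this
    have h3 : (p.1.2 - p.1.1) ^ 2 ≤ 2 * T.toReal := by linarith
    calc p.1.2 - p.1.1 = Real.sqrt ((p.1.2 - p.1.1) ^ 2) :=
          (Real.sqrt_sq (by linarith [p.2])).symm
      _ ≤ Real.sqrt (2 * T.toReal) := Real.sqrt_le_sqrt h3
  refine ⟨Real.sqrt (2 * T.toReal), ?_, ?_⟩
  · intro j t
    cases hj : pad α j with
    | none => simp only [tentD]; exact Real.sqrt_nonneg _
    | some p =>
        have h1 : tentD (some p) t ≤ (p.1.2 - p.1.1) / 2 := by
          rw [tentD_eq]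
          exact tent_le _ _ t (le_of_lt p.2)
        have h2 := hpers j p hj
        have h3 : (0:ℝ) ≤ Real.sqrt (2 * T.toReal) := Real.sqrt_nonneg _
        calc tentD (some p) t ≤ (p.1.2 - p.1.1) / 2 := h1
          _ ≤ Real.sqrt (2 * T.toReal) := by linarith
  · intro t h hh
    have hsub : {j : ℕ ⊕ ℕ | h < tentD (pad α j) t} ⊆
        {j : ℕ ⊕ ℕ | ENNReal.ofReal (2 * h ^ 2) ≤ ENNReal.ofReal (drkQ (pad α j) none)} := by
      intro j hj
      rw [Set.mem_setOf_eq] at hj ⊢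
      cases hjp : pad α j with
      | none => rw [hjp] at hj; change h < 0 at hj; linarith
      | some p =>
          rw [hjp] at hj
          have h1 : tentD (some p) t ≤ (p.1.2 - p.1.1) / 2 := by
            rw [tentD_eq]
            exact tent_le _ _ t (le_of_lt p.2)
          have h2 : 2 * h < p.1.2 - p.1.1 := by linarith
          have h3 : 2 * h ^ 2 ≤ (p.1.2 - p.1.1) ^ 2 / 2 := by nlinarith
          exact ENNReal.ofReal_le_ofReal h3
    refine Set.Finite.subset ?_ hsub
    exact ENNReal.finite_const_le_of_tsum_ne_top hTne
      (by positivity : ENNReal.ofReal (2 * h ^ 2) ≠ 0)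
  
lemma tsum_lintegral_le {f : ℕ → ℝ → ℝ≥0∞} :
    ∑' n : ℕ, ∫⁻ t : ℝ, f n t ≤ ∫⁻ t : ℝ, ∑' n : ℕ, f n t := by
  rw [ENNReal.tsum_eq_iSup_sum]
  refine iSup_le (fun s => ?_)
  have h1 : ∑ n ∈ s, ∫⁻ t : ℝ, f n t ≤ ∫⁻ t : ℝ, ∑ n ∈ s, f n t := by
    classical
    induction s using Finset.cons_induction with
    | empty => simp
    | cons a s ha ih =>
        rw [Finset.sum_cons]
        calc (∫⁻ t, f a t) + ∑ n ∈ s, ∫⁻ t, f n t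
            ≤ (∫⁻ t, f a t) + ∫⁻ t, ∑ n ∈ s, f n t := add_le_add_right ih _
          _ ≤ ∫⁻ t, (f a t + ∑ n ∈ s, f n t) := MeasureTheory.le_lintegral_add _ _
          _ = ∫⁻ t, ∑ n ∈ Finset.cons a s ha, f n t := by
              refine MeasureTheory.lintegral_congr (fun t => ?_)
              rw [Finset.sum_cons]
  exact le_trans h1 (MeasureTheory.lintegral_mono (fun t => ENNReal.sum_le_tsum s))

end Stmt16Aux
namespace Stmt16Aux

lemma pointwise (α β : Diagram) (e : (ℕ ⊕ ℕ) ≃ (ℕ ⊕ ℕ)) (t : ℝ) (Cα Cβ : ℝ)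
    (hCα : ∀ j : ℕ ⊕ ℕ, ∀ s : ℝ, tentD (pad α j) s ≤ Cα)
    (hCβ : ∀ j : ℕ ⊕ ℕ, ∀ s : ℝ, tentD (pad β j) s ≤ Cβ)
    (hFα : ∀ h : ℝ, 0 < h → {j : ℕ ⊕ ℕ | h < tentD (pad α j) t}.Finite)
    (hFβ : ∀ h : ℝ, 0 < h → {j : ℕ ⊕ ℕ | h < tentD (pad β j) t}.Finite) :
    ∑' k : ℕ, ENNReal.ofReal |landC α (k + 1) t - landC β (k + 1) t| ≤
      ∑' i : ℕ ⊕ ℕ, ENNReal.ofReal |tentD (pad α i) t - tentD (pad β (e i)) t| := by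
  have hL : ∀ k : ℕ, ENNReal.ofReal |landC α (k + 1) t - landC β (k + 1) t|
      = ∫⁻ h in Set.Ioi (0:ℝ), chi (landC α (k + 1) t) (landC β (k + 1) t) h :=
    fun k => (chi_lintegral _ _ (landC_nonneg α _ t) (landC_nonneg β _ t)).symm
  have hR : ∀ i : ℕ ⊕ ℕ, ENNReal.ofReal |tentD (pad α i) t - tentD (pad β (e i)) t|
      = ∫⁻ h in Set.Ioi (0:ℝ), chi (tentD (pad α i) t) (tentD (pad β (e i)) t) h :=
    fun i => (chi_lintegral _ _ (tentD_nonneg _ t) (tentD_nonneg _ t)).symm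
  calc ∑' k : ℕ, ENNReal.ofReal |landC α (k + 1) t - landC β (k + 1) t|
      = ∑' k : ℕ, ∫⁻ h in Set.Ioi (0:ℝ), chi (landC α (k + 1) t) (landC β (k + 1) t) h :=
        tsum_congr hL
    _ = ∫⁻ h in Set.Ioi (0:ℝ), ∑' k : ℕ, chi (landC α (k + 1) t) (landC β (k + 1) t) h :=
        (MeasureTheory.lintegral_tsum (fun k => (chi_measurable _ _).aemeasurable)).symm
    _ ≤ ∫⁻ h in Set.Ioi (0:ℝ), ∑' i : ℕ ⊕ ℕ,
          chi (tentD (pad α i) t) (tentD (pad β (e i)) t) h := by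
        refine MeasureTheory.lintegral_mono_ae ?_
        rw [MeasureTheory.ae_restrict_iff' measurableSet_Ioi]
        refine MeasureTheory.ae_of_all _ (fun h hh => ?_)
        rw [Set.mem_Ioi] at hh
        -- counting sets
        set A := {j : ℕ ⊕ ℕ | h < tentD (pad α j) t} with hA
        set B := {j : ℕ ⊕ ℕ | h < tentD (pad β (e j)) t} with hB
        have hAfin : A.Finite := hFα h hh
        have hBfin : B.Finite := by
          have : B = e ⁻¹' {j : ℕ ⊕ ℕ | h < tentD (pad β j) t} := rfl
          rw [this]
          exact Set.Finite.preimage e.injective.injOn (hFβ h hh)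
        have hkey : ∀ k : ℕ, chi (landC α (k + 1) t) (landC β (k + 1) t) h
            = if ((k + 1 ≤ A.ncard) ≠ (k + 1 ≤ B.ncard)) then (1:ℝ≥0∞) else 0 := by
          intro k
          unfold chi
          have e1 : (h < landC α (k + 1) t) = (k + 1 ≤ A.ncard) :=
            propext (landC_lt_iff α t Cα (fun j => hCα j t) k h hh hAfin)
          have e2 : (h < landC β (k + 1) t) = (k + 1 ≤ B.ncard) := by
            have hBcard : B.ncard = {j : ℕ ⊕ ℕ | h < tentD (pad β j) t}.ncard := by
              have : B = e ⁻¹' {j : ℕ ⊕ ℕ | h < tentD (pad β j) t} := rfl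
              rw [this, ← Equiv.image_symm_eq_preimage,
                Set.ncard_image_of_injective _ e.symm.injective]
            rw [hBcard]
            exact propext (landC_lt_iff β t Cβ (fun j => hCβ j t) k h hh (hFβ h hh))
          simp only [e1, e2]
        have hkey2 : ∀ i : ℕ ⊕ ℕ, chi (tentD (pad α i) t) (tentD (pad β (e i)) t) h
            = if ((i ∈ A) ≠ (i ∈ B)) then (1:ℝ≥0∞) else 0 := fun i => rfl
        calc ∑' k : ℕ, chi (landC α (k + 1) t) (landC β (k + 1) t) h
            = ∑' k : ℕ, (if ((k + 1 ≤ A.ncard) ≠ (k + 1 ≤ B.ncard)) then (1:ℝ≥0∞) else 0) :=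
              tsum_congr hkey
          _ ≤ ∑' i : ℕ ⊕ ℕ, (if ((i ∈ A) ≠ (i ∈ B)) then (1:ℝ≥0∞) else 0) :=
              count_le A B hAfin hBfin
          _ = ∑' i : ℕ ⊕ ℕ, chi (tentD (pad α i) t) (tentD (pad β (e i)) t) h :=
              tsum_congr (fun i => (hkey2 i).symm)
    _ = ∑' i : ℕ ⊕ ℕ, ∫⁻ h in Set.Ioi (0:ℝ), chi (tentD (pad α i) t) (tentD (pad β (e i)) t) h :=
        MeasureTheory.lintegral_tsum (fun i => (chi_measurable _ _).aemeasurable)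
    _ = ∑' i : ℕ ⊕ ℕ, ENNReal.ofReal |tentD (pad α i) t - tentD (pad β (e i)) t| :=
        tsum_congr (fun i => (hR i).symm)

end Stmt16Aux
open Stmt16Aux in
/-- Landscape stability for countable persistence diagrams that are 1-finite
with respect to `d_rk`: `‖Λα − Λβ‖₁ ≤ ½ W₁^rk(α, β)`. -/
theorem stmt16 (α β : Diagram)
    (hα : W1c drkQ α emptyDiagram < ⊤) (hβ : W1c drkQ β emptyDiagram < ⊤) :
    lambdaDistC α β ≤ W1c drkQ α β / 2 := by
  rw [ENNReal.le_div_iff_mul_le (Or.inl (by norm_num : (2:ℝ≥0∞) ≠ 0))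
    (Or.inl (by norm_num : (2:ℝ≥0∞) ≠ ⊤)), W1c]
  refine le_iInf (fun e => ?_)
  obtain ⟨Cα, hCα, hFα⟩ := diagram_bounds α hα
  obtain ⟨Cβ, hCβ, hFβ⟩ := diagram_bounds β hβ
  calc lambdaDistC α β * 2
      ≤ (∫⁻ t : ℝ, ∑' k : ℕ, ENNReal.ofReal |landC α (k + 1) t - landC β (k + 1) t|) * 2 :=
        mul_le_mul_left tsum_lintegral_le 2
    _ ≤ (∫⁻ t : ℝ, ∑' i : ℕ ⊕ ℕ,
          ENNReal.ofReal |tentD (pad α i) t - tentD (pad β (e i)) t|) * 2 :=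
        mul_le_mul_left (MeasureTheory.lintegral_mono (fun t =>
          pointwise α β e t Cα Cβ hCα hCβ (fun h hh => hFα t h hh) (fun h hh => hFβ t h hh))) 2
    _ = (∑' i : ℕ ⊕ ℕ,
          ∫⁻ t : ℝ, ENNReal.ofReal |tentD (pad α i) t - tentD (pad β (e i)) t|) * 2 := by
        rw [MeasureTheory.lintegral_tsum (f := fun i t => ENNReal.ofReal |tentD (pad α i) t - tentD (pad β (e i)) t|) (fun i =>
          (((tentD_continuous (pad α i)).sub
            (tentD_continuous (pad β (e i)))).abs.measurable.ennreal_ofReal).aemeasurable)]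
    _ = ∑' i : ℕ ⊕ ℕ,
          (∫⁻ t : ℝ, ENNReal.ofReal |tentD (pad α i) t - tentD (pad β (e i)) t|) * 2 :=
        ENNReal.tsum_mul_right.symm
    _ ≤ ∑' i : ℕ ⊕ ℕ, ENNReal.ofReal (drkQ (pad α i) (pad β (e i))) :=
        ENNReal.tsum_le_tsum (fun i => pair_integral (pad α i) (pad β (e i)))

end
end
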